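/- arXiv:1910.14081 — 4 statements merged into one kernel-verified Lean document; each statement's English description precedes it below -/
import Mathlib

section
/- For each i ∈ [n] let f_i: ℝ → ℝ be convex and differentiable, and for each ordered pair i ≠ j let g_ij: ℝ² → ℝ be convex, differentiable, and symmetric (g_ij(a,b) = g_ji(b,a)). Define Φ(x) := ∑_i f_i(x_i) + ½ ∑_{i≠j} max{g_ij(x_i,x_j), 0}, and assume Φ attains its minimum on ℝⁿ. Consider the dynamics x_i^{k+1} = x_i^k − α^k (f_i'(x_i^k) + ∑_{j ∈ N_i(x^k)} ∂g_ij/∂x_i (x_i^k, x_j^k)), i ∈ [n], where α^k = γ_k / ‖g^k‖, g^k ∈ ℝⁿ is the vector with components g_i^k = f_i'(x_i^k) + ∑_{j ∈ N_i(x^k)} ∂g_ij/∂x_i (x_i^k, x_j^k), assumed nonzero for every k, and γ_k > 0 satisfies lim_k γ_k = 0, ∑_k γ_k = ∞ and ∑_k γ_k² < ∞. Then the sequence {x^k} converges to a global minimizer x* of Φ. -/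
open Filter

lemma tangent1d {f : ℝ → ℝ} (hc : ConvexOn ℝ Set.univ f) (hd : Differentiable ℝ f)
    (a b : ℝ) : f a + deriv f a * (b - a) ≤ f b := by
  rcases lt_trichotomy a b with h | rfl | h
  · have h1 := hc.deriv_le_slope (Set.mem_univ a) (Set.mem_univ b) h (hd a)
    rw [slope_def_field] at h1
    rw [le_div_iff₀ (by linarith)] at h1
    linarith
  · simp
  · have h1 := hc.slope_le_deriv (Set.mem_univ b) (Set.mem_univ a) h (hd a)
    rw [slope_def_field] at h1
    rw [div_le_iff₀ (by linarith)] at h1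
    linarith

lemma partial1_eq {G : ℝ × ℝ → ℝ} (hd : Differentiable ℝ G) (a b : ℝ) :
    deriv (fun t => G (t, b)) a = fderiv ℝ G (a, b) (1, 0) := by
  have h1 : HasDerivAt (fun t : ℝ => ((t, b) : ℝ × ℝ)) ((1 : ℝ), (0 : ℝ)) a :=
    (hasDerivAt_id a).prodMk (hasDerivAt_const a b)
  exact ((hd (a, b)).hasFDerivAt.comp_hasDerivAt a h1).deriv

lemma partial2_eq {G : ℝ × ℝ → ℝ} (hd : Differentiable ℝ G) (a b : ℝ) :
    deriv (fun t => G (a, t)) b = fderiv ℝ G (a, b) (0, 1) := by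
  have h1 : HasDerivAt (fun t : ℝ => ((a, t) : ℝ × ℝ)) ((0 : ℝ), (1 : ℝ)) b :=
    (hasDerivAt_const b a).prodMk (hasDerivAt_id b)
  exact ((hd (a, b)).hasFDerivAt.comp_hasDerivAt b h1).deriv

lemma tangent2d {G : ℝ × ℝ → ℝ} (hc : ConvexOn ℝ Set.univ G) (hd : Differentiable ℝ G)
    (p q : ℝ × ℝ) :
    G p + deriv (fun t => G (t, p.2)) p.1 * (q.1 - p.1)
        + deriv (fun t => G (p.1, t)) p.2 * (q.2 - p.2) ≤ G q := by
  set h : ℝ → ℝ := fun s => G (p + s • (q - p)) with hh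
  have hcurve : ∀ t : ℝ, HasDerivAt (fun s : ℝ => p + s • (q - p)) (q - p) t := by
    intro t
    simpa using ((hasDerivAt_id t).smul_const (q - p)).const_add p
  have hder : ∀ t : ℝ, HasDerivAt h (fderiv ℝ G (p + t • (q - p)) (q - p)) t := fun t =>
    (hd _).hasFDerivAt.comp_hasDerivAt t (hcurve t)
  have hhc : ConvexOn ℝ Set.univ h := by
    have h2 := hc.comp_affineMap (AffineMap.lineMap p q)
    rw [Set.preimage_univ] at h2
    convert h2 using 1
    rotate_left 4
    funext s
    simp [hh, AffineMap.lineMap_apply]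
    ring_nf
    all_goals rfl
  have hhd : Differentiable ℝ h := fun t => (hder t).differentiableAt
  have := tangent1d hhc hhd 0 1
  rw [(hder 0).deriv] at this
  have e0 : h 0 = G p := by simp [hh]
  have e1 : h 1 = G q := by simp [hh]
  have lin : fderiv ℝ G p (q - p) =
      fderiv ℝ G (p.1, p.2) (1, 0) * (q.1 - p.1) + fderiv ℝ G (p.1, p.2) (0, 1) * (q.2 - p.2) := by
    have e : q - p = (q.1 - p.1) • ((1 : ℝ), (0 : ℝ)) + (q.2 - p.2) • ((0 : ℝ), (1 : ℝ)) := by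
      ext <;> simp
    rw [e, map_add, map_smul, map_smul]
    simp [mul_comm]
  rw [partial1_eq hd, partial2_eq hd]
  simp only [e0, e1, smul_eq_mul, zero_smul, add_zero] at this
  rw [lin] at this
  linarith

noncomputable def Paux (n : ℕ) (g : Fin n → Fin n → ℝ → ℝ → ℝ)
    (v y : EuclideanSpace ℝ (Fin n)) (i j : Fin n) : ℝ :=
  (if 0 < g i j (v i) (v j) then deriv (fun t => g i j t (v j)) (v i) else 0) * (y i - v i)

lemma subgrad_ineq (n : ℕ) (f : Fin n → ℝ → ℝ) (g : Fin n → Fin n → ℝ → ℝ → ℝ)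
    (hfc : ∀ i, ConvexOn ℝ Set.univ (f i)) (hfd : ∀ i, Differentiable ℝ (f i))
    (hgc : ∀ i j, i ≠ j → ConvexOn ℝ Set.univ (fun p : ℝ × ℝ => g i j p.1 p.2))
    (hgd : ∀ i j, i ≠ j → Differentiable ℝ (fun p : ℝ × ℝ => g i j p.1 p.2))
    (hsym : ∀ i j a b, i ≠ j → g i j a b = g j i b a)
    (v y : EuclideanSpace ℝ (Fin n)) :
    (∑ i, f i (v i) + (1/2) * ∑ i, ∑ j ∈ Finset.univ.filter (fun j => j ≠ i),
        max (g i j (v i) (v j)) 0)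
      + ∑ i, (deriv (f i) (v i) +
          ∑ j ∈ Finset.univ.filter (fun j => j ≠ i ∧ 0 < g i j (v i) (v j)),
            deriv (fun t => g i j t (v j)) (v i)) * (y i - v i)
    ≤ ∑ i, f i (y i) + (1/2) * ∑ i, ∑ j ∈ Finset.univ.filter (fun j => j ≠ i),
        max (g i j (y i) (y j)) 0 := by
  classical
  -- Part A: the f-terms
  have hA : ∑ i, f i (v i) + ∑ i, deriv (f i) (v i) * (y i - v i) ≤ ∑ i, f i (y i) := by
    rw [← Finset.sum_add_distrib]
    exact Finset.sum_le_sum fun i _ => tangent1d (hfc i) (hfd i) (v i) (y i)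
  -- pairwise inequality
  have hpair : ∀ i j : Fin n, j ≠ i →
      max (g i j (v i) (v j)) 0 + (Paux n g v y i j + Paux n g v y j i)
        ≤ max (g i j (y i) (y j)) 0 := by
    intro i j hji
    have hij : i ≠ j := fun h => hji h.symm
    by_cases hpos : 0 < g i j (v i) (v j)
    · have hpos' : 0 < g j i (v j) (v i) := by rw [← hsym i j _ _ hij]; exact hpos
      have h2 := tangent2d (hgc i j hij) (hgd i j hij) (v i, v j) (y i, y j)
      simp only at h2
      have e2 : deriv (fun t => g i j (v i) t) (v j) = deriv (fun t => g j i t (v i)) (v j) := by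
        congr 1
        funext t
        exact hsym i j (v i) t hij
      rw [e2] at h2
      rw [Paux, Paux, if_pos hpos, if_pos hpos', max_eq_left hpos.le]
      have h3 : g i j (y i) (y j) ≤ max (g i j (y i) (y j)) 0 := le_max_left _ _
      linarith
    · rw [Paux, Paux, if_neg hpos, zero_mul,
        if_neg (fun h => hpos (by rw [hsym i j _ _ hij]; exact h)), zero_mul,
        max_eq_right (not_lt.mp hpos)]
      simpa using le_max_right (g i j (y i) (y j)) 0
  -- sum the pairwise inequalities
  have hB : (∑ i, ∑ j ∈ Finset.univ.filter (fun j => j ≠ i), max (g i j (v i) (v j)) 0)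
      + ((∑ i, ∑ j ∈ Finset.univ.filter (fun j => j ≠ i), Paux n g v y i j)
        + (∑ i, ∑ j ∈ Finset.univ.filter (fun j => j ≠ i), Paux n g v y j i))
      ≤ ∑ i, ∑ j ∈ Finset.univ.filter (fun j => j ≠ i), max (g i j (y i) (y j)) 0 := by
    rw [← Finset.sum_add_distrib, ← Finset.sum_add_distrib]
    refine Finset.sum_le_sum fun i _ => ?_
    rw [← Finset.sum_add_distrib, ← Finset.sum_add_distrib]
    refine Finset.sum_le_sum fun j hj => ?_
    rw [Finset.mem_filter] at hj
    exact hpair i j hj.2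
  -- swap
  have hswap : (∑ i, ∑ j ∈ Finset.univ.filter (fun j => j ≠ i), Paux n g v y j i)
      = ∑ i, ∑ j ∈ Finset.univ.filter (fun j => j ≠ i), Paux n g v y i j := by
    rw [Finset.sum_comm' (t' := Finset.univ) (s' := fun j => Finset.univ.filter (fun i => i ≠ j))]
    intro i j
    simp [Finset.mem_filter, and_comm, ne_comm, eq_comm]

  -- identify the gradient cross terms with Paux sums
  have hS : ∀ i : Fin n,
      (∑ j ∈ Finset.univ.filter (fun j => j ≠ i ∧ 0 < g i j (v i) (v j)),
        deriv (fun t => g i j t (v j)) (v i)) * (y i - v i)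
      = ∑ j ∈ Finset.univ.filter (fun j => j ≠ i), Paux n g v y i j := by
    intro i
    rw [Finset.sum_mul]
    rw [show (Finset.univ.filter (fun j => j ≠ i ∧ 0 < g i j (v i) (v j)))
        = (Finset.univ.filter (fun j => j ≠ i)).filter (fun j => 0 < g i j (v i) (v j)) by
      rw [Finset.filter_filter]]
    rw [Finset.sum_filter]
    refine Finset.sum_congr rfl fun j _ => ?_
    rw [Paux]
    by_cases h : 0 < g i j (v i) (v j) <;> simp [h]
  -- assemble
  have expand : ∑ i, (deriv (f i) (v i) +
      ∑ j ∈ Finset.univ.filter (fun j => j ≠ i ∧ 0 < g i j (v i) (v j)),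
        deriv (fun t => g i j t (v j)) (v i)) * (y i - v i)
      = (∑ i, deriv (f i) (v i) * (y i - v i))
        + ∑ i, ∑ j ∈ Finset.univ.filter (fun j => j ≠ i), Paux n g v y i j := by
    rw [← Finset.sum_add_distrib]
    refine Finset.sum_congr rfl fun i _ => ?_
    rw [add_mul, hS i]
  rw [expand]
  rw [hswap] at hB
  linarith

set_option maxHeartbeats 2000000 in
/-- normalized subgradient method: the saddle-point dynamics with
normalized diminishing, non-summable, square-summable step sizes converge to a
global minimizer of `Φ(x) = ∑ᵢ fᵢ(xᵢ) + ½ ∑_{i≠j} max{g_ij(xᵢ,xⱼ), 0}`. -/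
theorem normalized_subgradient_dynamics_converge
    (n : ℕ) (f : Fin n → ℝ → ℝ) (g : Fin n → Fin n → ℝ → ℝ → ℝ)
    (hfc : ∀ i, ConvexOn ℝ Set.univ (f i)) (hfd : ∀ i, Differentiable ℝ (f i))
    (hgc : ∀ i j, i ≠ j → ConvexOn ℝ Set.univ (fun p : ℝ × ℝ => g i j p.1 p.2))
    (hgd : ∀ i j, i ≠ j → Differentiable ℝ (fun p : ℝ × ℝ => g i j p.1 p.2))
    (hsym : ∀ i j a b, i ≠ j → g i j a b = g j i b a)
    (hmin : ∃ z : EuclideanSpace ℝ (Fin n), ∀ y : EuclideanSpace ℝ (Fin n),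
      (∑ i, f i (z i) + (1/2) * ∑ i, ∑ j ∈ Finset.univ.filter (fun j => j ≠ i),
          max (g i j (z i) (z j)) 0)
      ≤ ∑ i, f i (y i) + (1/2) * ∑ i, ∑ j ∈ Finset.univ.filter (fun j => j ≠ i),
          max (g i j (y i) (y j)) 0)
    (γ : ℕ → ℝ) (hγpos : ∀ k, 0 < γ k)
    (hγ0 : Tendsto γ atTop (nhds 0))
    (hγdiv : Tendsto (fun K => ∑ k ∈ Finset.range K, γ k) atTop atTop)
    (hγsq : Summable (fun k => (γ k)^2))
    (x : ℕ → EuclideanSpace ℝ (Fin n)) (gk : ℕ → EuclideanSpace ℝ (Fin n))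
    (hgk : ∀ k i, gk k i = deriv (f i) (x k i) +
      ∑ j ∈ Finset.univ.filter (fun j => j ≠ i ∧ 0 < g i j (x k i) (x k j)),
        deriv (fun t => g i j t (x k j)) (x k i))
    (hgknz : ∀ k, gk k ≠ 0)
    (hdyn : ∀ k, x (k + 1) = x k - (γ k / ‖gk k‖) • gk k) :
    ∃ xs : EuclideanSpace ℝ (Fin n), Tendsto x atTop (nhds xs) ∧
      ∀ y : EuclideanSpace ℝ (Fin n),
        (∑ i, f i (xs i) + (1/2) * ∑ i, ∑ j ∈ Finset.univ.filter (fun j => j ≠ i),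
            max (g i j (xs i) (xs j)) 0)
        ≤ ∑ i, f i (y i) + (1/2) * ∑ i, ∑ j ∈ Finset.univ.filter (fun j => j ≠ i),
            max (g i j (y i) (y j)) 0 := by
  classical
  obtain ⟨z, hz⟩ := hmin
  set Φ : EuclideanSpace ℝ (Fin n) → ℝ := fun y =>
    ∑ i, f i (y i) + (1/2) * ∑ i, ∑ j ∈ Finset.univ.filter (fun j => j ≠ i),
      max (g i j (y i) (y j)) 0 with hΦdef
  have hz' : ∀ y, Φ z ≤ Φ y := hz
  -- continuity of Φ
  have hproj : ∀ i : Fin n, Continuous fun w : EuclideanSpace ℝ (Fin n) => w i :=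
    fun i => (EuclideanSpace.proj i).continuous
  have hΦc : Continuous Φ := by
    rw [hΦdef]
    apply Continuous.add
    · exact continuous_finset_sum _ fun i _ => (hfd i).continuous.comp (hproj i)
    · apply Continuous.mul continuous_const
      refine continuous_finset_sum _ fun i _ => continuous_finset_sum _ fun j hj => ?_
      rw [Finset.mem_filter] at hj
      have hij : i ≠ j := fun h => hj.2 h.symm
      exact ((hgd i j hij).continuous.comp ((hproj i).prodMk (hproj j))).max continuous_const
  -- inner product formula
  have hip : ∀ a b : EuclideanSpace ℝ (Fin n), (inner ℝ a b : ℝ) = ∑ i, a i * b i := fun a b => by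
    simp [PiLp.inner_apply, RCLike.inner_apply, conj_trivial, mul_comm]
  -- subgradient inequality, inner form
  have hsub : ∀ k (w : EuclideanSpace ℝ (Fin n)),
      Φ (x k) - Φ w ≤ (inner ℝ (x k - w) (gk k) : ℝ) := by
    intro k w
    have h1 := subgrad_ineq n f g hfc hfd hgc hgd hsym (x k) w
    have h2 : ∑ i, (deriv (f i) (x k i) +
        ∑ j ∈ Finset.univ.filter (fun j => j ≠ i ∧ 0 < g i j (x k i) (x k j)),
          deriv (fun t => g i j t (x k j)) (x k i)) * (w i - x k i)
        = (inner ℝ (gk k) (w - x k) : ℝ) := by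
      rw [hip]
      refine Finset.sum_congr rfl fun i _ => ?_
      rw [hgk k i]
      congr 1
    have h3 : (inner ℝ (x k - w) (gk k) : ℝ) = -(inner ℝ (gk k) (w - x k) : ℝ) := by
      rw [show x k - w = -(w - x k) by abel, inner_neg_left]
      rw [real_inner_comm]
    rw [h3]
    rw [h2] at h1
    simp only [hΦdef]
    linarith
  have hgpos : ∀ k, (0:ℝ) < ‖gk k‖ := fun k => norm_pos_iff.mpr (hgknz k)
  -- step identity
  have hstep : ∀ k (w : EuclideanSpace ℝ (Fin n)),
      ‖x (k+1) - w‖^2 = ‖x k - w‖^2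
        - 2*(γ k/‖gk k‖)*(inner ℝ (x k - w) (gk k) : ℝ) + (γ k)^2 := by
    intro k w
    have e1 : x (k+1) - w = (x k - w) - (γ k/‖gk k‖) • gk k := by rw [hdyn k]; abel
    rw [e1, norm_sub_sq_real, real_inner_smul_right, norm_smul, Real.norm_eq_abs,
      abs_of_pos (div_pos (hγpos k) (hgpos k))]
    have hne : ‖gk k‖ ≠ 0 := (hgpos k).ne'
    field_simp
  -- key inequality
  have hkey : ∀ k (w : EuclideanSpace ℝ (Fin n)),
      ‖x (k+1) - w‖^2 ≤ ‖x k - w‖^2 - 2*(γ k/‖gk k‖)*(Φ (x k) - Φ w) + (γ k)^2 := by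
    intro k w
    have h4 := hsub k w
    have hα : 0 < γ k / ‖gk k‖ := div_pos (hγpos k) (hgpos k)
    have h5 := mul_le_mul_of_nonneg_left h4 hα.le
    rw [hstep k w]
    nlinarith
  set C := ∑' k, (γ k)^2 with hC
  have hCpart : ∀ K, ∑ k ∈ Finset.range K, (γ k)^2 ≤ C :=
    fun K => Summable.sum_le_tsum _ (fun i _ => sq_nonneg _) hγsq
  -- boundedness
  have hmono : ∀ (w : EuclideanSpace ℝ (Fin n)), (∀ k, Φ w ≤ Φ (x k)) →
      ∀ k, ‖x (k+1) - w‖^2 ≤ ‖x k - w‖^2 + (γ k)^2 := by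
    intro w hw k
    have h6 := hkey k w
    have hα : 0 < γ k / ‖gk k‖ := div_pos (hγpos k) (hgpos k)
    have h7 : 0 ≤ (γ k / ‖gk k‖) * (Φ (x k) - Φ w) :=
      mul_nonneg hα.le (sub_nonneg.mpr (hw k))
    linarith
  have hDbound : ∀ K, ‖x K - z‖^2 ≤ ‖x 0 - z‖^2 + C := by
    have h7 : ∀ K, ‖x K - z‖^2 ≤ ‖x 0 - z‖^2 + ∑ k ∈ Finset.range K, (γ k)^2 := by
      intro K
      induction K with
      | zero => simp
      | succ K ih =>
        rw [Finset.sum_range_succ]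
        have := hmono z (fun k => hz' (x k)) K
        linarith
    intro K
    exact (h7 K).trans (by linarith [hCpart K])
  set r := Real.sqrt (‖x 0 - z‖^2 + C) with hr
  have hxr : ∀ k, ‖x k - z‖ ≤ r := by
    intro k
    rw [hr, ← Real.sqrt_sq (norm_nonneg (x k - z))]
    exact Real.sqrt_le_sqrt (hDbound k)
  set R := ‖z‖ + r with hR
  have hxR : ∀ k, ‖x k‖ ≤ R := by
    intro k
    calc ‖x k‖ = ‖z + (x k - z)‖ := by rw [add_sub_cancel]
      _ ≤ ‖z‖ + ‖x k - z‖ := norm_add_le _ _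
      _ ≤ R := by rw [hR]; linarith [hxr k]
  have hR0 : 0 ≤ R := le_trans (norm_nonneg (x 0)) (hxR 0)
  -- bound on subgradient norms
  obtain ⟨w0, _, hw0⟩ := (isCompact_closedBall (0 : EuclideanSpace ℝ (Fin n)) (R+1)).exists_isMaxOn
    ⟨0, Metric.mem_closedBall_self (by linarith)⟩ hΦc.continuousOn
  set M := Φ w0 with hM
  set L := M - Φ z with hL
  have hgL : ∀ k, ‖gk k‖ ≤ L := by
    intro k
    set u := ‖gk k‖⁻¹ • gk k with hu
    have hun : ‖u‖ = 1 := by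
      rw [hu, norm_smul, Real.norm_eq_abs, abs_of_pos (inv_pos.mpr (hgpos k)),
        inv_mul_cancel₀ (hgpos k).ne']
    have hw : x k + u ∈ Metric.closedBall (0 : EuclideanSpace ℝ (Fin n)) (R+1) := by
      rw [Metric.mem_closedBall, dist_zero_right]
      calc ‖x k + u‖ ≤ ‖x k‖ + ‖u‖ := norm_add_le _ _
        _ ≤ R + 1 := by rw [hun]; linarith [hxR k]
    have h8 := hsub k (x k + u)
    have h9 : (inner ℝ (x k - (x k + u)) (gk k) : ℝ) = -‖gk k‖ := by
      rw [show x k - (x k + u) = -u by abel, inner_neg_left, hu, real_inner_smul_left,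
        real_inner_self_eq_norm_sq]
      field_simp [(hgpos k).ne']
    rw [h9] at h8
    have h10 : Φ (x k + u) ≤ M := hw0 hw
    have h11 : Φ z ≤ Φ (x k) := hz' (x k)
    rw [hL]
    linarith
  have hLpos : 0 < L := lt_of_lt_of_le (hgpos 0) (hgL 0)
  have he0 : ∀ k, 0 ≤ Φ (x k) - Φ z := fun k => sub_nonneg.mpr (hz' (x k))
  -- refined key inequality with z
  have hkey2 : ∀ k, ‖x (k+1) - z‖^2 ≤ ‖x k - z‖^2
      - (2/L)*(γ k * (Φ (x k) - Φ z)) + (γ k)^2 := by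
    intro k
    have h6 := hkey k z
    have h12 : γ k / L ≤ γ k / ‖gk k‖ :=
      div_le_div_of_nonneg_left (hγpos k).le (hgpos k) (hgL k)
    have h13 : (γ k / L) * (Φ (x k) - Φ z) ≤ (γ k / ‖gk k‖) * (Φ (x k) - Φ z) :=
      mul_le_mul_of_nonneg_right h12 (he0 k)
    have h14 : (2/L)*(γ k * (Φ (x k) - Φ z)) = 2 * ((γ k / L) * (Φ (x k) - Φ z)) := by ring
    rw [h14]
    linarith
  -- telescoping
  have tel : ∀ K, ‖x K - z‖^2 + (2/L) * ∑ k ∈ Finset.range K, γ k * (Φ (x k) - Φ z)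
      ≤ ‖x 0 - z‖^2 + ∑ k ∈ Finset.range K, (γ k)^2 := by
    intro K
    induction K with
    | zero => simp
    | succ K ih =>
      rw [Finset.sum_range_succ, Finset.sum_range_succ]
      have expand : (2/L) * (∑ k ∈ Finset.range K, γ k * (Φ (x k) - Φ z)
            + γ K * (Φ (x K) - Φ z))
          = (2/L) * ∑ k ∈ Finset.range K, γ k * (Φ (x k) - Φ z)
            + (2/L)*(γ K * (Φ (x K) - Φ z)) := by ring
      rw [expand]
      have := hkey2 K
      linarith
  set Sb := (L/2) * (‖x 0 - z‖^2 + C) with hSb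
  have hsum_bound : ∀ K, ∑ k ∈ Finset.range K, γ k * (Φ (x k) - Φ z) ≤ Sb := by
    intro K
    have h15 : (2/L) * ∑ k ∈ Finset.range K, γ k * (Φ (x k) - Φ z)
        ≤ ‖x 0 - z‖^2 + C := by
      have := tel K
      nlinarith [sq_nonneg ‖x K - z‖, hCpart K]
    have h16 : ∑ k ∈ Finset.range K, γ k * (Φ (x k) - Φ z)
        = (L/2) * ((2/L) * ∑ k ∈ Finset.range K, γ k * (Φ (x k) - Φ z)) := by
      field_simp
    rw [h16, hSb]
    exact mul_le_mul_of_nonneg_left h15 (by positivity)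
  -- frequently small
  have hfreq : ∀ m : ℕ, ∃ k, m ≤ k ∧ Φ (x k) - Φ z < 1/((m:ℝ)+1) := by
    intro N
    by_contra hcon
    push_neg at hcon
    set ε := 1/((N:ℝ)+1) with hε
    have hεpos : 0 < ε := by positivity
    obtain ⟨K, hK⟩ := ((hγdiv.eventually_gt_atTop
      (∑ k ∈ Finset.range N, γ k + (Sb + 1)/ε)).and (eventually_ge_atTop N)).exists
    obtain ⟨hK1, hK2⟩ := hK
    have h17 : ∑ k ∈ Finset.Ico N K, γ k * (Φ (x k) - Φ z)
        ≤ ∑ k ∈ Finset.range K, γ k * (Φ (x k) - Φ z) := by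
      apply Finset.sum_le_sum_of_subset_of_nonneg
      · intro a ha
        rw [Finset.mem_Ico] at ha
        exact Finset.mem_range.mpr ha.2
      · intro k _ _
        exact mul_nonneg (hγpos k).le (he0 k)
    have h18 : ε * ∑ k ∈ Finset.Ico N K, γ k
        ≤ ∑ k ∈ Finset.Ico N K, γ k * (Φ (x k) - Φ z) := by
      rw [Finset.mul_sum]
      refine Finset.sum_le_sum fun k hk => ?_
      rw [Finset.mem_Ico] at hk
      have := hcon k hk.1
      calc ε * γ k = γ k * ε := by ring
        _ ≤ γ k * (Φ (x k) - Φ z) := mul_le_mul_of_nonneg_left this (hγpos k).le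
    rw [Finset.sum_Ico_eq_sub _ hK2] at h18
    have h19 : (Sb + 1)/ε < ∑ k ∈ Finset.range K, γ k - ∑ k ∈ Finset.range N, γ k := by
      linarith
    have h20 : Sb + 1 < ε * (∑ k ∈ Finset.range K, γ k - ∑ k ∈ Finset.range N, γ k) := by
      rw [show Sb + 1 = ε * ((Sb+1)/ε) by field_simp]
      exact mul_lt_mul_of_pos_left h19 hεpos
    linarith [hsum_bound K]
  choose ks hks1 hks2 using hfreq
  -- compactness: limit point
  obtain ⟨xbar, _, φ, hφmono, hφtend⟩ :=
    (isCompact_closedBall z r).tendsto_subseq (x := fun m => x (ks m))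
    (fun m => by rw [Metric.mem_closedBall, dist_eq_norm]; exact hxr (ks m))
  -- Φ xbar = Φ z
  have t2 : Tendsto (fun l => Φ (x (ks (φ l))) - Φ z) atTop (nhds 0) := by
    have hle : ∀ l : ℕ, Φ (x (ks (φ l))) - Φ z ≤ 1/((l:ℝ)+1) := by
      intro l
      have h21 : Φ (x (ks (φ l))) - Φ z < 1/((φ l : ℝ)+1) := hks2 (φ l)
      have h22 : (1:ℝ)/((φ l : ℝ)+1) ≤ 1/((l:ℝ)+1) := by
        apply one_div_le_one_div_of_le (by positivity)
        have h23 : (l:ℝ) ≤ (φ l : ℝ) := Nat.cast_le.mpr hφmono.le_apply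
        linarith
      linarith
    exact squeeze_zero (fun l => he0 _) hle tendsto_one_div_add_atTop_nhds_zero_nat
  have t1 : Tendsto (fun l => Φ (x (ks (φ l))) - Φ z) atTop (nhds (Φ xbar - Φ z)) := by
    exact ((hΦc.tendsto xbar).comp hφtend).sub_const (Φ z)
  have hΦxbar : Φ xbar = Φ z := by
    have := tendsto_nhds_unique t1 t2
    linarith
  have hminxbar : ∀ y, Φ xbar ≤ Φ y := fun y => by rw [hΦxbar]; exact hz' y
  -- Fejér convergence to xbar
  set a : ℕ → ℝ := fun k => ‖x k - xbar‖^2 with ha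
  have hstep' : ∀ k, ‖x (k+1) - xbar‖^2 ≤ ‖x k - xbar‖^2 + (γ k)^2 :=
    hmono xbar (fun k => hminxbar (x k))
  set T : ℕ → ℝ := fun k => ∑' j, (γ (j + k))^2 with hT
  have hTs : ∀ k, Summable (fun j => (γ (j + k))^2) :=
    fun k => (summable_nat_add_iff k).2 hγsq
  have hTrec : ∀ k, T k = (γ k)^2 + T (k+1) := by
    intro k
    simp only [hT]
    rw [Summable.tsum_eq_zero_add (hTs k)]
    simp only [zero_add]
    congr 1
    exact tsum_congr fun j => by rw [show j + 1 + k = j + (k+1) by omega]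
  have hT0 : Tendsto T atTop (nhds 0) := by
    rw [hT]; exact tendsto_sum_nat_add (fun n => (γ n)^2)
  have hTnn : ∀ k, 0 ≤ T k := fun k => tsum_nonneg fun j => sq_nonneg _
  set b : ℕ → ℝ := fun k => a k + T k with hb
  have hbanti : Antitone b := antitone_nat_of_succ_le fun k => by
    have h23 := hstep' k
    have h24 := hTrec k
    simp only [hb, ha]
    linarith
  have hbbdd : BddBelow (Set.range b) := by
    refine ⟨0, fun v hv => ?_⟩
    obtain ⟨k, rfl⟩ := hv
    have h30 : (0:ℝ) ≤ a k := sq_nonneg _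
    have h31 := hTnn k
    simp only [hb]
    linarith
  have hbtend : Tendsto b atTop (nhds (⨅ k, b k)) := tendsto_atTop_ciInf hbanti hbbdd
  have hatend : Tendsto a atTop (nhds (⨅ k, b k)) := by
    have h25 := hbtend.sub hT0
    simp only [sub_zero] at h25
    have : (fun k => b k - T k) = a := by funext k; simp only [hb]; ring
    rwa [this] at h25
  have hksφ : Tendsto (fun l => ks (φ l)) atTop atTop :=
    tendsto_atTop_mono (fun l => le_trans hφmono.le_apply (hks1 (φ l))) tendsto_id
  have t3 : Tendsto (fun l => a (ks (φ l))) atTop (nhds (⨅ k, b k)) := hatend.comp hksφ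
  have t4 : Tendsto (fun l => a (ks (φ l))) atTop (nhds 0) := by
    have h26 : Tendsto (fun l => x (ks (φ l)) - xbar) atTop (nhds 0) := by
      have := hφtend.sub_const xbar
      simpa using this
    have h27 := (h26.norm.pow 2)
    simpa [ha] using h27
  have hi0 : ⨅ k, b k = 0 := tendsto_nhds_unique t3 t4
  rw [hi0] at hatend
  have hxtend : Tendsto x atTop (nhds xbar) := by
    rw [tendsto_iff_norm_sub_tendsto_zero]
    have h28 := (Real.continuous_sqrt.tendsto 0).comp hatend
    simp only [Function.comp_def, Real.sqrt_zero] at h28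
    have h29 : (fun k => Real.sqrt (a k)) = fun k => ‖x k - xbar‖ := by
      funext k
      rw [ha]
      exact Real.sqrt_sq (norm_nonneg _)
    rw [h29] at h28
    simpa using h28
  refine ⟨xbar, hxtend, fun y => ?_⟩
  have := hminxbar y
  simp only [hΦdef] at this
  exact this
end

section
/- For each i ∈ [n] let f_i: ℝ → ℝ be convex and differentiable, and for each ordered pair i ≠ j let g_ij: ℝ² → ℝ be convex, differentiable, and symmetric. Define Φ(x) := ∑_i f_i(x_i) + ½ ∑_{i≠j} max{g_ij(x_i,x_j), 0}, and suppose the set X of global minimizers of Φ is nonempty. Let x ∈ ℝⁿ, let g ∈ ℝⁿ have components g_i = f_i'(x_i) + ∑_{j ∈ N_i(x)} ∂g_ij/∂x_i (x_i, x_j), g ≠ 0, and let α ∈ [0, 2(Φ(x) − min Φ)/‖g‖²]. Then the point x⁺ = x − αg satisfies dist(x⁺, X) ≤ dist(x, X), where dist(y, X) = inf_{z ∈ X} ‖y − z‖. -/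
/-- 1D gradient inequality for convex differentiable functions. -/
lemma conv1d (f : ℝ → ℝ) (hc : ConvexOn ℝ Set.univ f) (hd : Differentiable ℝ f)
    (a b : ℝ) : f a + deriv f a * (b - a) ≤ f b := by
  rcases lt_trichotomy a b with h | h | h
  · have h1 := hc.deriv_le_slope (Set.mem_univ a) (Set.mem_univ b) h (hd a)
    rw [slope_def_field] at h1
    have hba : 0 < b - a := by linarith
    rw [le_div_iff₀ hba] at h1
    nlinarith
  · simp [h]
  · have h1 := hc.slope_le_deriv (Set.mem_univ b) (Set.mem_univ a) h (hd a)
    rw [slope_def_field] at h1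
    have hab : 0 < a - b := by linarith
    rw [div_le_iff₀ hab] at h1
    nlinarith

/-- Gradient inequality for convex differentiable functions on a normed space. -/
lemma convE {E : Type*} [NormedAddCommGroup E] [NormedSpace ℝ E]
    (G : E → ℝ) (hc : ConvexOn ℝ Set.univ G) (hd : Differentiable ℝ G)
    (p q : E) : G p + fderiv ℝ G p (q - p) ≤ G q := by
  set L : ℝ → E := fun t => p + t • (q - p) with hL
  have hline : ∀ t : ℝ, HasDerivAt L (q - p) t := by
    intro t
    rw [hL]
    convert ((hasDerivAt_id t).smul_const (q - p)).const_add p using 1 <;> simp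
  have hφd : ∀ t, HasDerivAt (fun t => G (L t)) (fderiv ℝ G (L t) (q - p)) t := by
    intro t
    exact ((hd (L t)).hasFDerivAt).comp_hasDerivAt t (hline t)
  have hφc : ConvexOn ℝ Set.univ (fun t => G (L t)) := by
    have A : ℝ →ᵃ[ℝ] E := (AffineMap.lineMap p q : ℝ →ᵃ[ℝ] E)
    have := hc.comp_affineMap (AffineMap.lineMap p q : ℝ →ᵃ[ℝ] E)
    have heq : (G ∘ (AffineMap.lineMap p q : ℝ →ᵃ[ℝ] E)) = fun t => G (L t) := by
      funext t
      simp [hL, AffineMap.lineMap_apply_module', add_comm]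
    rw [heq] at this
    simpa using this
  have hφdiff : Differentiable ℝ (fun t => G (L t)) := fun t => (hφd t).differentiableAt
  have key := conv1d _ hφc hφdiff 0 1
  have hd0 : deriv (fun t => G (L t)) 0 = fderiv ℝ G p (q - p) := by
    have := (hφd 0).deriv
    simpa [hL] using this
  have hL0 : L 0 = p := by simp [hL]
  have hL1 : L 1 = q := by simp [hL]
  rw [hd0, hL0, hL1] at key
  simpa using key

/-- Per-pair subgradient bound for `max (G ·) 0`. -/
lemma pair_bound (G : ℝ × ℝ → ℝ) (hc : ConvexOn ℝ Set.univ G) (hd : Differentiable ℝ G)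
    (a b c d : ℝ) :
    (if 0 < G (a, b) then
       deriv (fun t => G (t, b)) a * (c - a) + deriv (fun t => G (a, t)) b * (d - b)
     else 0) ≤ max (G (c, d)) 0 - max (G (a, b)) 0 := by
  by_cases hpos : 0 < G (a, b)
  · rw [if_pos hpos, max_eq_left hpos.le]
    have key := convE G hc hd (a, b) (c, d)
    have h1 : HasDerivAt (fun t => G (t, b)) (fderiv ℝ G (a, b) (1, 0)) a :=
      (hd (a, b)).hasFDerivAt.comp_hasDerivAt a (HasDerivAt.prodMk (hasDerivAt_id a) (hasDerivAt_const a b))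
    have h2 : HasDerivAt (fun t => G (a, t)) (fderiv ℝ G (a, b) (0, 1)) b :=
      (hd (a, b)).hasFDerivAt.comp_hasDerivAt b (HasDerivAt.prodMk (hasDerivAt_const b a) (hasDerivAt_id b))
    rw [h1.deriv, h2.deriv]
    have hvec : ((c, d) - (a, b) : ℝ × ℝ) = (c - a) • ((1 : ℝ), (0 : ℝ)) + (d - b) • ((0 : ℝ), (1 : ℝ)) := by
      simp [Prod.ext_iff]
    have hlin : fderiv ℝ G (a, b) ((c, d) - (a, b)) =
        (c - a) * fderiv ℝ G (a, b) (1, 0) + (d - b) * fderiv ℝ G (a, b) (0, 1) := by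
      rw [hvec, map_add, map_smul, map_smul]; simp [smul_eq_mul]
    have hmz : G (c, d) ≤ max (G (c, d)) 0 := le_max_left _ _
    rw [hlin] at key
    linarith
  · rw [if_neg hpos, max_eq_right (not_lt.mp hpos)]
    simpa using le_max_right (G (c, d)) 0
/-- subgradient step does not increase distance to the optimal set:
with `X` the (nonempty) set of global minimizers of `Φ` and
`α ∈ [0, 2(Φ(x) − min Φ)/‖g‖²]`, the update `x⁺ = x − αg` satisfies
`dist(x⁺, X) ≤ dist(x, X)`. -/
theorem subgradient_step_nonexpansive_to_optimal_set
    (n : ℕ) (f : Fin n → ℝ → ℝ) (g : Fin n → Fin n → ℝ → ℝ → ℝ)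
    (hfc : ∀ i, ConvexOn ℝ Set.univ (f i)) (hfd : ∀ i, Differentiable ℝ (f i))
    (hgc : ∀ i j, i ≠ j → ConvexOn ℝ Set.univ (fun p : ℝ × ℝ => g i j p.1 p.2))
    (hgd : ∀ i j, i ≠ j → Differentiable ℝ (fun p : ℝ × ℝ => g i j p.1 p.2))
    (hsym : ∀ i j a b, i ≠ j → g i j a b = g j i b a)
    (Φ : EuclideanSpace ℝ (Fin n) → ℝ)
    (hΦ : ∀ z : EuclideanSpace ℝ (Fin n), Φ z = ∑ i, f i (z i) +
      (1/2) * ∑ i, ∑ j ∈ Finset.univ.filter (fun j => j ≠ i), max (g i j (z i) (z j)) 0)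
    (X : Set (EuclideanSpace ℝ (Fin n)))
    (hX : X = {z : EuclideanSpace ℝ (Fin n) | ∀ y, Φ z ≤ Φ y})
    (hXne : X.Nonempty)
    (x gvec : EuclideanSpace ℝ (Fin n))
    (hgvec : ∀ i, gvec i = deriv (f i) (x i) +
      ∑ j ∈ Finset.univ.filter (fun j => j ≠ i ∧ 0 < g i j (x i) (x j)),
        deriv (fun t => g i j t (x j)) (x i))
    (hgnz : gvec ≠ 0)
    (xstar : EuclideanSpace ℝ (Fin n)) (hxstar : xstar ∈ X)
    (α : ℝ) (hα0 : 0 ≤ α) (hα1 : α ≤ 2 * (Φ x - Φ xstar) / ‖gvec‖^2) :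
    Metric.infDist (x - α • gvec) X ≤ Metric.infDist x X := by
  -- abbreviations for partial derivatives
  set P1 : Fin n → Fin n → ℝ := fun i j => deriv (fun t => g i j t (x j)) (x i) with hP1
  set P2 : Fin n → Fin n → ℝ := fun i j => deriv (fun t => g i j (x i) t) (x j) with hP2
  -- the subgradient inequality
  have subgrad : ∀ z : EuclideanSpace ℝ (Fin n),
      ∑ i, gvec i * (z i - x i) ≤ Φ z - Φ x := by
    intro z
    -- pair bounds, ite form
    have hpair : ∀ i j, j ≠ i →
        (if 0 < g i j (x i) (x j) then P1 i j * (z i - x i) + P2 i j * (z j - x j) else 0)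
          ≤ max (g i j (z i) (z j)) 0 - max (g i j (x i) (x j)) 0 := by
      intro i j hji
      have hij : i ≠ j := fun h => hji h.symm
      exact pair_bound (fun p : ℝ × ℝ => g i j p.1 p.2) (hgc i j hij) (hgd i j hij)
        (x i) (x j) (z i) (z j)
    -- double sums in ite form
    set S1 : ℝ := ∑ i, ∑ j, (if j ≠ i ∧ 0 < g i j (x i) (x j)
      then P1 i j * (z i - x i) else 0) with hS1
    set S2 : ℝ := ∑ i, ∑ j, (if j ≠ i ∧ 0 < g i j (x i) (x j)
      then P2 i j * (z j - x j) else 0) with hS2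
    -- S2 = S1 by the symmetry of g
    have hS21 : S2 = S1 := by
      rw [hS2, Finset.sum_comm, hS1]
      refine Finset.sum_congr rfl fun j _ => Finset.sum_congr rfl fun i _ => ?_
      by_cases hc : j ≠ i ∧ 0 < g i j (x i) (x j)
      · have hij : i ≠ j := fun h => hc.1 h.symm
        have hcond : i ≠ j ∧ 0 < g j i (x j) (x i) := by
          refine ⟨hij, ?_⟩
          rw [← hsym i j (x i) (x j) hij]; exact hc.2
        rw [if_pos hc, if_pos hcond]
        have hfun : (fun t => g i j (x i) t) = (fun t => g j i t (x i)) :=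
          funext fun t => hsym i j (x i) t hij
        have : P2 i j = P1 j i := by
          simp only [hP1, hP2]
          rw [hfun]
        rw [this]
      · have hcond : ¬ (i ≠ j ∧ 0 < g j i (x j) (x i)) := by
          intro hcontra
          exact hc ⟨fun h => hcontra.1 h.symm,
            by rw [hsym i j (x i) (x j) (hcontra.1)]; exact hcontra.2⟩
        rw [if_neg hc, if_neg hcond]
    -- the half-sum of pair increments dominates S1
    have hhalf : S1 ≤ (1/2) * ∑ i, ∑ j ∈ Finset.univ.filter (fun j => j ≠ i),
        (max (g i j (z i) (z j)) 0 - max (g i j (x i) (x j)) 0) := by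
      have hsum : S1 + S2 ≤ ∑ i, ∑ j ∈ Finset.univ.filter (fun j => j ≠ i),
          (max (g i j (z i) (z j)) 0 - max (g i j (x i) (x j)) 0) := by
        rw [hS1, hS2, ← Finset.sum_add_distrib]
        refine Finset.sum_le_sum fun i _ => ?_
        rw [← Finset.sum_add_distrib, Finset.sum_filter]
        refine Finset.sum_le_sum fun j _ => ?_
        by_cases hji : j = i
        · simp [hji]
        · rw [if_pos hji]
          by_cases hpos : 0 < g i j (x i) (x j)
          · have := hpair i j hji
            rw [if_pos hpos] at this
            rw [if_pos ⟨hji, hpos⟩, if_pos ⟨hji, hpos⟩]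
            linarith
          · have := hpair i j hji
            rw [if_neg hpos] at this
            rw [if_neg (fun h => hpos h.2), if_neg (fun h => hpos h.2)]
            linarith
      rw [hS21] at hsum
      linarith
    -- f part
    have hfpart : ∀ i, deriv (f i) (x i) * (z i - x i) ≤ f i (z i) - f i (x i) := by
      intro i
      have := conv1d (f i) (hfc i) (hfd i) (x i) (z i)
      linarith
    -- LHS decomposition
    have hLHS : ∑ i, gvec i * (z i - x i)
        = (∑ i, deriv (f i) (x i) * (z i - x i)) + S1 := by
      rw [hS1, ← Finset.sum_add_distrib]
      refine Finset.sum_congr rfl fun i _ => ?_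
      rw [hgvec i, add_mul, Finset.sum_mul, Finset.sum_filter]
    -- Φ difference decomposition
    have hΦdiff : Φ z - Φ x = (∑ i, (f i (z i) - f i (x i))) +
        (1/2) * ∑ i, ∑ j ∈ Finset.univ.filter (fun j => j ≠ i),
          (max (g i j (z i) (z j)) 0 - max (g i j (x i) (x j)) 0) := by
      rw [hΦ z, hΦ x]
      simp only [Finset.sum_sub_distrib]
      ring
    rw [hLHS, hΦdiff]
    have : ∑ i, deriv (f i) (x i) * (z i - x i) ≤ ∑ i, (f i (z i) - f i (x i)) :=
      Finset.sum_le_sum fun i _ => hfpart i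
    linarith
  -- translate to inner products
  have subgrad' : ∀ z : EuclideanSpace ℝ (Fin n),
      inner ℝ gvec (z - x) ≤ Φ z - Φ x := by
    intro z
    have : (inner ℝ gvec (z - x) : ℝ) = ∑ i, gvec i * (z i - x i) := by
      rw [PiLp.inner_apply]
      refine Finset.sum_congr rfl fun i _ => ?_
      simp [RCLike.inner_apply, mul_comm]
    rw [this]
    exact subgrad z
  -- distance argument
  have hgpos : (0 : ℝ) < ‖gvec‖^2 := by
    have : 0 < ‖gvec‖ := norm_pos_iff.mpr hgnz
    positivity
  have hstep : α * ‖gvec‖^2 ≤ 2 * (Φ x - Φ xstar) := by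
    rw [le_div_iff₀ hgpos] at hα1
    linarith
  have key : ∀ z ∈ X, dist (x - α • gvec) z ≤ dist x z := by
    intro z hz
    have hΦz : Φ z = Φ xstar := by
      rw [hX] at hz hxstar
      exact le_antisymm (hz xstar) (hxstar z)
    have hsub := subgrad' z
    rw [hΦz] at hsub
    have hinner : (Φ x - Φ xstar) ≤ inner ℝ gvec (x - z) := by
      have : (inner ℝ gvec (x - z) : ℝ) = - inner ℝ gvec (z - x) := by
        rw [← inner_neg_right]; congr 1; abel
      rw [this]; linarith
    have hexp : ‖x - α • gvec - z‖^2
        = ‖x - z‖^2 - 2 * α * inner ℝ gvec (x - z) + α^2 * ‖gvec‖^2 := by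
      have h1 : x - α • gvec - z = (x - z) - α • gvec := by abel
      rw [h1, norm_sub_sq_real, real_inner_smul_right, norm_smul]
      rw [real_inner_comm]
      simp only [mul_pow, sq_abs, Real.norm_eq_abs]
      ring
    have hineq : ‖x - α • gvec - z‖^2 ≤ ‖x - z‖^2 := by
      rw [hexp]
      have h2 : α * (α * ‖gvec‖^2) ≤ α * (2 * (Φ x - Φ xstar)) :=
        mul_le_mul_of_nonneg_left hstep hα0
      have h3 : α * (Φ x - Φ xstar) ≤ α * inner ℝ gvec (x - z) :=
        mul_le_mul_of_nonneg_left hinner hα0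
      nlinarith
    rw [dist_eq_norm, dist_eq_norm]
    nlinarith [norm_nonneg (x - α • gvec - z), norm_nonneg (x - z)]
  have : Nonempty X := hXne.to_subtype
  rw [Metric.infDist_eq_iInf, Metric.infDist_eq_iInf]
  refine ciInf_mono ⟨0, ?_⟩ fun y => key y y.2
  rintro _ ⟨y, rfl⟩
  exact dist_nonneg
end

section
/- Let m > 0. Let f: ℝⁿ → ℝ be convex, differentiable, and bounded below, and for each ordered pair i ≠ j let g_ij: ℝ² → ℝ be twice continuously differentiable, convex, and symmetric. Define D = {x ∈ ℝⁿ : g_ij(x_i,x_j) = 0 for some i ≠ j} and Φ(x) := f(x) + ½ ∑_{i≠j} max{g_ij(x_i,x_j), 0}. Let {x^k} be generated by x^{k+1} = x^k − (G^k)⁻¹ g^k, where each G^k is a positive-definite diagonal matrix with G^k ⪯ mI, g^k is the vector with components g_i^k = ∂f/∂x_i(x^k) + ∑_{j ∈ N_i(x^k)} ∂g_ij/∂x_i(x_i^k, x_j^k) (a subgradient of Φ at x^k, equal to ∇Φ(x^k) when x^k ∉ D). Assume that x^k ∈ D for at most finitely many k, and that for every k with x^k ∉ D, Φ(y) ≤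 Φ(x^k) + (g^k)ᵀ(y − x^k) + ½‖y − x^k‖²_{G^k} for all y with Φ(y) ≤ Φ(x^k). Then lim_{k→∞} ‖g^k‖ = 0, and every limit point of the sequence {x^k} is a global minimizer of Φ; in particular, if {x^k} converges, its limit is a global minimizer of Φ. -/
open Filter

section Aux
variable {E : Type*} [NormedAddCommGroup E] [InnerProductSpace ℝ E]

lemma convex_hasFDerivAt_le {Φ : E → ℝ} (hc : ConvexOn ℝ Set.univ Φ)
    {L : E →L[ℝ] ℝ} {a : E} (hL : HasFDerivAt Φ L a) (y : E) :
    Φ a + L (y - a) ≤ Φ y := by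
  set φ : ℝ → ℝ := fun t => Φ (a + t • (y - a)) with hφdef
  have hline : ∀ t : ℝ, HasDerivAt (fun s : ℝ => a + s • (y - a)) (y - a) t := by
    intro t
    simpa using ((hasDerivAt_id t).smul_const (y - a)).const_add a
  have h0 : a + (0 : ℝ) • (y - a) = a := by simp
  have hL0 : HasFDerivAt Φ L (a + (0 : ℝ) • (y - a)) := by rw [h0]; exact hL
  have hder : HasDerivAt φ (L (y - a)) 0 := hL0.comp_hasDerivAt 0 (hline 0)
  have hconv : ConvexOn ℝ Set.univ φ := by
    have hmap := hc.comp_affineMap (AffineMap.lineMap a y)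
    have : (Φ ∘ (AffineMap.lineMap a y)) = φ := by
      funext t
      simp [AffineMap.lineMap_apply, hφdef, add_comm]
    rw [this] at hmap
    simpa using hmap
  have hslope := hconv.le_slope_of_hasDerivAt (Set.mem_univ 0) (Set.mem_univ 1) one_pos hder
  have h1 : φ 1 = Φ y := by simp [hφdef]
  have h0' : φ 0 = Φ a := by simp [hφdef]
  have hms : L (y - a) = L y - L a := by simp
  rw [slope_def_field] at hslope
  simp [h1, h0'] at hslope
  linarith

lemma eventually_lt_of_hasDerivAt_neg {ψ : ℝ → ℝ} {c : ℝ} (h : HasDerivAt ψ c 0) (hc : c < 0) :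
    ∀ᶠ t in nhdsWithin (0:ℝ) (Set.Ioi 0), ψ t < ψ 0 := by
  have hs := hasDerivAt_iff_tendsto_slope.1 h
  have h2 : ∀ᶠ t in nhdsWithin (0:ℝ) {(0:ℝ)}ᶜ, slope ψ 0 t < 0 :=
    hs.eventually_lt_const hc
  have h3 : ∀ᶠ t in nhdsWithin (0:ℝ) (Set.Ioi 0), slope ψ 0 t < 0 :=
    nhdsWithin_mono 0 (fun t (ht : t ∈ Set.Ioi 0) => ne_of_gt ht) h2
  filter_upwards [h3, self_mem_nhdsWithin] with t ht (ht0 : t ∈ Set.Ioi 0)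
  rw [slope_def_field] at ht
  have : (ψ t - ψ 0) / (t - 0) < 0 := ht
  rw [sub_zero] at this
  have htpos : (0:ℝ) < t := ht0
  rcases div_neg_iff.1 this with ⟨h1, h2⟩ | ⟨h1, h2⟩
  · linarith
  · linarith
end Aux

noncomputable section Aux2
open scoped Classical

variable {n : ℕ}

local notation "E" => EuclideanSpace ℝ (Fin n)

lemma hasFDerivAt_Phi
    (f : E → ℝ) (hfd : Differentiable ℝ f)
    (g : Fin n → Fin n → ℝ → ℝ → ℝ)
    (hgC : ∀ i j, i ≠ j → ContDiff ℝ 2 (fun p : ℝ × ℝ => g i j p.1 p.2))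
    (hsym : ∀ i j a b, i ≠ j → g i j a b = g j i b a)
    (a : E)
    (ha : ∀ i j, i ≠ j → g i j (a i) (a j) ≠ 0) :
    ∃ L : E →L[ℝ] ℝ,
      HasFDerivAt (fun z : E => f z +
        (1/2) * ∑ i, ∑ j ∈ Finset.univ.filter (fun j => j ≠ i), max (g i j (z i) (z j)) 0) L a ∧
      ∀ v : E, L v = ∑ i, (gradient f a i +
        ∑ j ∈ Finset.univ.filter (fun j => j ≠ i ∧ 0 < g i j (a i) (a j)),
          deriv (fun t => g i j t (a j)) (a i)) * v i := by
  -- the coordinate-pair linear map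
  set A : Fin n → Fin n → (E →L[ℝ] ℝ × ℝ) :=
    fun i j => (EuclideanSpace.proj i).prod (EuclideanSpace.proj j) with hA
  -- candidate derivative of each pair term
  set Lp : Fin n → Fin n → (E →L[ℝ] ℝ) := fun i j =>
    if 0 < g i j (a i) (a j) then
      (fderiv ℝ (fun p : ℝ × ℝ => g i j p.1 p.2) (a i, a j)).comp (A i j)
    else 0 with hLp
  have hGdiff : ∀ i j, i ≠ j → DifferentiableAt ℝ (fun p : ℝ × ℝ => g i j p.1 p.2) (a i, a j) :=
    fun i j hij => ((hgC i j hij).differentiable (by norm_num)).differentiableAt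
  have hcontz : ∀ i j, i ≠ j → ContinuousAt (fun z : E => g i j (z i) (z j)) a := by
    intro i j hij
    exact ((hgC i j hij).continuous.comp
      (((EuclideanSpace.proj (𝕜 := ℝ) i).continuous).prodMk
        ((EuclideanSpace.proj (𝕜 := ℝ) j).continuous))).continuousAt
  -- each pair term has derivative Lp i j
  have hterm : ∀ i j, i ≠ j →
      HasFDerivAt (fun z : E => max (g i j (z i) (z j)) 0) (Lp i j) a := by
    intro i j hij
    rcases lt_or_gt_of_ne (ha i j hij) with hneg | hpos
    · -- negative: locally the max is 0
      have hev : ∀ᶠ z in nhds a, g i j (z i) (z j) < 0 :=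
        (hcontz i j hij).eventually_lt_const hneg
      have hL0 : Lp i j = 0 := by
        rw [hLp]; simp only [if_neg (not_lt.2 (le_of_lt hneg))]
      rw [hL0]
      refine (hasFDerivAt_const (0:ℝ) a).congr_of_eventuallyEq ?_
      filter_upwards [hev] with z hz
      simp [max_eq_right (le_of_lt hz)]
    · -- positive: locally the max equals g
      have hev : ∀ᶠ z in nhds a, 0 < g i j (z i) (z j) :=
        (hcontz i j hij).eventually_const_lt hpos
      have hL0 : Lp i j = (fderiv ℝ (fun p : ℝ × ℝ => g i j p.1 p.2) (a i, a j)).comp (A i j) := by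
        rw [hLp]; simp only [if_pos hpos]
      rw [hL0]
      have hcomp : HasFDerivAt (fun z : E => g i j (z i) (z j))
          ((fderiv ℝ (fun p : ℝ × ℝ => g i j p.1 p.2) (a i, a j)).comp (A i j)) a := by
        have h1 := (hGdiff i j hij).hasFDerivAt
        have h2 : HasFDerivAt (A i j) (A i j) a := (A i j).hasFDerivAt
        exact h1.comp a h2
      refine hcomp.congr_of_eventuallyEq ?_
      filter_upwards [hev] with z hz
      simp [max_eq_left (le_of_lt hz)]
  -- full derivative
  set L : E →L[ℝ] ℝ := fderiv ℝ f a +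
    (1/2 : ℝ) • ∑ i, ∑ j ∈ Finset.univ.filter (fun j => j ≠ i), Lp i j with hL
  refine ⟨L, ?_, ?_⟩
  · have hsum : HasFDerivAt
        (fun z : E => ∑ i, ∑ j ∈ Finset.univ.filter (fun j => j ≠ i), max (g i j (z i) (z j)) 0)
        (∑ i, ∑ j ∈ Finset.univ.filter (fun j => j ≠ i), Lp i j) a := by
      refine HasFDerivAt.fun_sum (fun i _ => ?_)
      refine HasFDerivAt.fun_sum (fun j hj => ?_)
      exact hterm i j (Ne.symm (Finset.mem_filter.1 hj).2)
    have := ((hfd a).hasFDerivAt).add (hsum.const_mul (1/2 : ℝ))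
    exact this
  · intro v
    have hLv : L v = fderiv ℝ f a v +
        (1/2) * ∑ i, ∑ j ∈ Finset.univ.filter (fun j => j ≠ i), Lp i j v := by
      simp [hL, ContinuousLinearMap.sum_apply, smul_eq_mul]
    have hgrad : fderiv ℝ f a v = ∑ i, gradient f a i * v i := by
      have h1 : fderiv ℝ f a = (InnerProductSpace.toDual ℝ E) (gradient f a) :=
        ((hfd a).hasGradientAt.hasFDerivAt).fderiv
      rw [h1, InnerProductSpace.toDual_apply_apply]
      simp only [PiLp.inner_apply, RCLike.inner_apply, conj_trivial]
      exact Finset.sum_congr rfl (fun i _ => mul_comm _ _)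
    -- partial derivatives
    have hpart : ∀ i j, i ≠ j → (fderiv ℝ (fun p : ℝ × ℝ => g i j p.1 p.2) (a i, a j)) ((v i : ℝ), (v j : ℝ))
          = v i * deriv (fun t => g i j t (a j)) (a i)
            + v j * deriv (fun t => g i j (a i) t) (a j) := by
      intro i j hij
      set D := fderiv ℝ (fun p : ℝ × ℝ => g i j p.1 p.2) (a i, a j) with hD
      have hD1 : HasDerivAt (fun t => g i j t (a j)) (D ((1:ℝ), (0:ℝ))) (a i) := by
        have hcurve : HasDerivAt (fun t : ℝ => (t, a j)) ((1:ℝ), (0:ℝ)) (a i) :=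
          HasDerivAt.prodMk (hasDerivAt_id (a i)) (hasDerivAt_const (a i) (a j))
        exact ((hGdiff i j hij).hasFDerivAt).comp_hasDerivAt (a i) hcurve
      have hD2 : HasDerivAt (fun t => g i j (a i) t) (D ((0:ℝ), (1:ℝ))) (a j) := by
        have hcurve : HasDerivAt (fun t : ℝ => ((a i), t)) ((0:ℝ), (1:ℝ)) (a j) :=
          HasDerivAt.prodMk (hasDerivAt_const (a j) (a i)) (hasDerivAt_id (a j))
        exact ((hGdiff i j hij).hasFDerivAt).comp_hasDerivAt (a j) hcurve
      have hsplit : ((v i : ℝ), (v j : ℝ)) = v i • ((1:ℝ),(0:ℝ)) + v j • ((0:ℝ),(1:ℝ)) := by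
        simp [Prod.ext_iff]
      rw [hD1.deriv, hD2.deriv, hsplit, map_add, map_smul, map_smul, smul_eq_mul, smul_eq_mul]
    -- abbreviations
    set d1 : Fin n → Fin n → ℝ := fun i j => deriv (fun t => g i j t (a j)) (a i) with hd1
    set d2 : Fin n → Fin n → ℝ := fun i j => deriv (fun t => g i j (a i) t) (a j) with hd2
    have hLpval : ∀ i j, i ≠ j → Lp i j v =
        if 0 < g i j (a i) (a j) then v i * d1 i j + v j * d2 i j else 0 := by
      intro i j hij
      by_cases hp : 0 < g i j (a i) (a j)
      · rw [hLp]
        simp only [if_pos hp, ContinuousLinearMap.comp_apply]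
        have : (A i j) v = ((v i : ℝ), (v j : ℝ)) := rfl
        rw [this, hpart i j hij]
      · rw [hLp]; simp only [if_neg hp, ContinuousLinearMap.zero_apply]
    -- rewrite the double sum
    have hS : ∑ i, ∑ j ∈ Finset.univ.filter (fun j => j ≠ i), Lp i j v
        = (∑ i, ∑ j : Fin n, (if j ≠ i then (if 0 < g i j (a i) (a j) then v i * d1 i j else 0) else 0))
          + (∑ i, ∑ j : Fin n, (if j ≠ i then (if 0 < g i j (a i) (a j) then v j * d2 i j else 0) else 0)) := by
      rw [← Finset.sum_add_distrib]
      refine Finset.sum_congr rfl (fun i _ => ?_)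
      rw [Finset.sum_filter, ← Finset.sum_add_distrib]
      refine Finset.sum_congr rfl (fun j _ => ?_)
      by_cases hji : j ≠ i
      · simp only [if_pos hji, hLpval i j (Ne.symm hji)]
        by_cases hp : 0 < g i j (a i) (a j)
        · simp [if_pos hp]
        · simp [if_neg hp]
      · simp [hji]
    have hsymm2 : (∑ i, ∑ j : Fin n, (if j ≠ i then (if 0 < g i j (a i) (a j) then v j * d2 i j else 0) else 0))
        = (∑ i, ∑ j : Fin n, (if j ≠ i then (if 0 < g i j (a i) (a j) then v i * d1 i j else 0) else 0)) := by
      rw [Finset.sum_comm]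
      refine Finset.sum_congr rfl (fun i _ => ?_)
      refine Finset.sum_congr rfl (fun j _ => ?_)
      by_cases hji : j ≠ i
      · have hij : i ≠ j := Ne.symm hji
        have hgs : g j i (a j) (a i) = g i j (a i) (a j) := (hsym i j (a i) (a j) hij).symm
        have hds : d2 j i = d1 i j := by
          rw [hd2, hd1]
          simp only []
          have : (fun t => g j i (a j) t) = (fun t => g i j t (a j)) := by
            funext t; exact (hsym i j t (a j) hij).symm
          rw [this]
        simp only [if_pos hji, if_pos hij, hgs, hds]
      · have : ¬ (i ≠ j) := fun h => hji (Ne.symm h)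
        simp [hji, this]
    -- final assembly
    rw [hLv, hgrad, hS, hsymm2]
    have hT : ∀ i : Fin n,
        (∑ j ∈ Finset.univ.filter (fun j => j ≠ i ∧ 0 < g i j (a i) (a j)), d1 i j) * v i
        = ∑ j : Fin n, (if j ≠ i then (if 0 < g i j (a i) (a j) then v i * d1 i j else 0) else 0) := by
      intro i
      rw [Finset.sum_filter, Finset.sum_mul]
      refine Finset.sum_congr rfl (fun j _ => ?_)
      by_cases hji : j ≠ i
      · by_cases hp : 0 < g i j (a i) (a j)
        · simp [hji, hp, mul_comm]
        · simp [hji, hp]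
      · simp [hji]
    simp only [add_mul, Finset.sum_add_distrib]
    have : ∑ i, (∑ j ∈ Finset.univ.filter (fun j => j ≠ i ∧ 0 < g i j (a i) (a j)), d1 i j) * v i
        = ∑ i, ∑ j : Fin n, (if j ≠ i then (if 0 < g i j (a i) (a j) then v i * d1 i j else 0) else 0) :=
      Finset.sum_congr rfl (fun i _ => hT i)
    rw [this]
    ring
end Aux2

noncomputable section Aux3

variable {n : ℕ}

lemma convexOn_univ_sum {ι E' : Type*} [AddCommGroup E'] [Module ℝ E']
    (s : Finset ι) (F : ι → E' → ℝ) (h : ∀ i ∈ s, ConvexOn ℝ Set.univ (F i)) :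
    ConvexOn ℝ Set.univ (fun z => ∑ i ∈ s, F i z) := by
  classical
  induction s using Finset.induction with
  | empty => simpa using convexOn_const (0:ℝ) convex_univ
  | @insert a s hni ih =>
    have h1 := h a (Finset.mem_insert_self a s)
    have h2 := ih (fun i hi => h i (Finset.mem_insert_of_mem hi))
    have := h1.add h2
    simp only [Finset.sum_insert hni]; exact this

lemma convexOn_Phi
    (f : EuclideanSpace ℝ (Fin n) → ℝ) (hfc : ConvexOn ℝ Set.univ f)
    (g : Fin n → Fin n → ℝ → ℝ → ℝ)
    (hgc : ∀ i j, i ≠ j → ConvexOn ℝ Set.univ (fun p : ℝ × ℝ => g i j p.1 p.2)) :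
    ConvexOn ℝ Set.univ (fun z : EuclideanSpace ℝ (Fin n) => f z +
      (1/2) * ∑ i, ∑ j ∈ Finset.univ.filter (fun j => j ≠ i), max (g i j (z i) (z j)) 0) := by
  classical
  have hpair : ∀ i j : Fin n, i ≠ j → ConvexOn ℝ Set.univ
      (fun z : EuclideanSpace ℝ (Fin n) => max (g i j (z i) (z j)) 0) := by
    intro i j hij
    · have hconv := hgc i j hij
      set M : EuclideanSpace ℝ (Fin n) →ₗ[ℝ] ℝ × ℝ :=
        (EuclideanSpace.projₗ i).prod (EuclideanSpace.projₗ j) with hM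
      have h1 := hconv.comp_linearMap M
      have h2 : ConvexOn ℝ Set.univ (fun z : EuclideanSpace ℝ (Fin n) => g i j (z i) (z j)) := by
        exact h1
      have h3 := h2.sup (convexOn_const (0:ℝ) convex_univ)
      simpa [Pi.sup_def, max_comm] using h3
  have hsum : ConvexOn ℝ Set.univ (fun z : EuclideanSpace ℝ (Fin n) =>
      ∑ i, ∑ j ∈ Finset.univ.filter (fun j => j ≠ i), max (g i j (z i) (z j)) 0) := by
    refine convexOn_univ_sum _ _ (fun i _ => ?_)
    exact convexOn_univ_sum _ _ (fun j hj => hpair i j (Ne.symm (Finset.mem_filter.1 hj).2))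
  have hsmul := hsum.smul (by norm_num : (0:ℝ) ≤ 1/2)
  have := hfc.add hsmul
  exact this

lemma continuous_Phi
    (f : EuclideanSpace ℝ (Fin n) → ℝ) (hfd : Differentiable ℝ f)
    (g : Fin n → Fin n → ℝ → ℝ → ℝ)
    (hgC : ∀ i j, i ≠ j → ContDiff ℝ 2 (fun p : ℝ × ℝ => g i j p.1 p.2)) :
    Continuous (fun z : EuclideanSpace ℝ (Fin n) => f z +
      (1/2) * ∑ i, ∑ j ∈ Finset.univ.filter (fun j => j ≠ i), max (g i j (z i) (z j)) 0) := by
  refine (hfd.continuous).add (continuous_const.mul ?_)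
  refine continuous_finset_sum _ (fun i _ => ?_)
  refine continuous_finset_sum _ (fun j hj => ?_)
  have hij : i ≠ j := Ne.symm (Finset.mem_filter.1 hj).2
  have hg : Continuous (fun z : EuclideanSpace ℝ (Fin n) => g i j (z i) (z j)) :=
    (hgC i j hij).continuous.comp
      (((EuclideanSpace.proj (𝕜 := ℝ) i).continuous).prodMk
        ((EuclideanSpace.proj (𝕜 := ℝ) j).continuous))
  exact hg.max continuous_const
end Aux3

/-- quasi-Newton saddle-point dynamics: under quadratic upper bounds on
level sets away from the nondifferentiability set `D`, with positive-definite diagonal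
scalings `G^k = diag(d k) ⪯ mI` and at most finitely many iterates in `D`, the
(sub)gradients `g^k` of `Φ(x) = f(x) + ½ ∑_{i≠j} max{g_ij(xᵢ,xⱼ), 0}` vanish in the
limit, every cluster point of the iterates is a global minimizer of `Φ`, and in
particular the limit of the iterates, if it exists, minimizes `Φ`. -/
theorem quasi_newton_dynamics_gradient_vanishes_and_cluster_points_minimize
    (n : ℕ) (m : ℝ) (hm : 0 < m)
    (f : EuclideanSpace ℝ (Fin n) → ℝ)
    (hfc : ConvexOn ℝ Set.univ f) (hfd : Differentiable ℝ f)
    (hfB : BddBelow (Set.range f))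
    (g : Fin n → Fin n → ℝ → ℝ → ℝ)
    (hgC : ∀ i j, i ≠ j → ContDiff ℝ 2 (fun p : ℝ × ℝ => g i j p.1 p.2))
    (hgc : ∀ i j, i ≠ j → ConvexOn ℝ Set.univ (fun p : ℝ × ℝ => g i j p.1 p.2))
    (hsym : ∀ i j a b, i ≠ j → g i j a b = g j i b a)
    (Φ : EuclideanSpace ℝ (Fin n) → ℝ)
    (hΦ : ∀ z : EuclideanSpace ℝ (Fin n), Φ z = f z +
      (1/2) * ∑ i, ∑ j ∈ Finset.univ.filter (fun j => j ≠ i), max (g i j (z i) (z j)) 0)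
    (x : ℕ → EuclideanSpace ℝ (Fin n))
    (d : ℕ → Fin n → ℝ) (hdpos : ∀ k i, 0 < d k i) (hdm : ∀ k i, d k i ≤ m)
    (gk : ℕ → EuclideanSpace ℝ (Fin n))
    (hgk : ∀ k i, gk k i = gradient f (x k) i +
      ∑ j ∈ Finset.univ.filter (fun j => j ≠ i ∧ 0 < g i j (x k i) (x k j)),
        deriv (fun t => g i j t (x k j)) (x k i))
    (hdyn : ∀ k i, x (k + 1) i = x k i - gk k i / d k i)
    (hfinD : {k : ℕ | ∃ i j, i ≠ j ∧ g i j (x k i) (x k j) = 0}.Finite)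
    (hupper : ∀ k, ¬(∃ i j, i ≠ j ∧ g i j (x k i) (x k j) = 0) →
      ∀ y : EuclideanSpace ℝ (Fin n), Φ y ≤ Φ (x k) →
        Φ y ≤ Φ (x k) + (∑ i, gk k i * (y i - x k i))
          + (1/2) * ∑ i, d k i * (y i - x k i)^2) :
    Tendsto (fun k => ‖gk k‖) atTop (nhds 0) ∧
    (∀ z : EuclideanSpace ℝ (Fin n), MapClusterPt z atTop x → ∀ y, Φ z ≤ Φ y) ∧
    (∀ xs : EuclideanSpace ℝ (Fin n), Tendsto x atTop (nhds xs) → ∀ y, Φ xs ≤ Φ y) := by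
  classical
  have hΦconv : ConvexOn ℝ Set.univ Φ := by
    have := convexOn_Phi f hfc g hgc
    have hfun : Φ = fun z => f z +
        (1/2) * ∑ i, ∑ j ∈ Finset.univ.filter (fun j => j ≠ i), max (g i j (z i) (z j)) 0 :=
      funext hΦ
    rw [hfun]; exact this
  have hΦcont : Continuous Φ := by
    have := continuous_Phi f hfd g hgC
    have hfun : Φ = fun z => f z +
        (1/2) * ∑ i, ∑ j ∈ Finset.univ.filter (fun j => j ≠ i), max (g i j (z i) (z j)) 0 :=
      funext hΦ
    rw [hfun]; exact this
  -- derivative data at good points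
  have hgood : ∀ k, ¬(∃ i j, i ≠ j ∧ g i j (x k i) (x k j) = 0) →
      ∃ L : EuclideanSpace ℝ (Fin n) →L[ℝ] ℝ, HasFDerivAt Φ L (x k) ∧
        ∀ v, L v = ∑ i, gk k i * v i := by
    intro k hk
    push_neg at hk
    obtain ⟨L, h1, h2⟩ := hasFDerivAt_Phi f hfd g hgC hsym (x k) hk
    refine ⟨L, ?_, ?_⟩
    · have hfun : Φ = fun z => f z +
          (1/2) * ∑ i, ∑ j ∈ Finset.univ.filter (fun j => j ≠ i), max (g i j (z i) (z j)) 0 :=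
        funext hΦ
      rw [hfun]; exact h1
    · intro v
      rw [h2 v]
      exact Finset.sum_congr rfl (fun i _ => by rw [hgk k i])
  -- subgradient inequality
  have hsub : ∀ k, ¬(∃ i j, i ≠ j ∧ g i j (x k i) (x k j) = 0) →
      ∀ y, Φ (x k) + ∑ i, gk k i * (y i - x k i) ≤ Φ y := by
    intro k hk y
    obtain ⟨L, hL, hLv⟩ := hgood k hk
    have h := convex_hasFDerivAt_le hΦconv hL y
    rw [hLv (y - x k)] at h
    have : ∑ i, gk k i * ((y - x k) i) = ∑ i, gk k i * (y i - x k i) :=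
      Finset.sum_congr rfl (fun i _ => by rw [PiLp.sub_apply])
    rw [this] at h
    exact h
  have hnormsq : ∀ u : EuclideanSpace ℝ (Fin n), ‖u‖^2 = ∑ i, (u i)^2 := by
    intro u
    rw [← real_inner_self_eq_norm_sq]
    simp only [PiLp.inner_apply, RCLike.inner_apply, conj_trivial, sq]
  -- descent lemma
  have hdescent : ∀ k, ¬(∃ i j, i ≠ j ∧ g i j (x k i) (x k j) = 0) →
      Φ (x (k+1)) ≤ Φ (x k) - (1/(2*m)) * ‖gk k‖^2 := by
    intro k hk
    obtain ⟨L, hL, hLv⟩ := hgood k hk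
    set q : ℝ := ∑ i, (gk k i)^2 / d k i with hq
    set w : EuclideanSpace ℝ (Fin n) := WithLp.toLp 2 (fun i => -(gk k i / d k i)) with hw
    have hwapp : ∀ i, w i = -(gk k i / d k i) := fun i => rfl
    have hx1 : x (k+1) = x k + w := by
      ext i
      rw [hdyn k i]
      show x k i - gk k i / d k i = x k i + w i
      rw [hwapp]; ring
    have hq0 : 0 ≤ q :=
      Finset.sum_nonneg (fun i _ => div_nonneg (sq_nonneg _) (le_of_lt (hdpos k i)))
    have hcoord : ∀ (t : ℝ) (i : Fin n), (x k + t • w) i - x k i = t * (-(gk k i / d k i)) := by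
      intro t i
      rw [PiLp.add_apply, PiLp.smul_apply, smul_eq_mul, hwapp]
      ring
    have hup : ∀ t : ℝ, Φ (x k + t • w) ≤ Φ (x k) →
        Φ (x k + t • w) ≤ Φ (x k) - (t - t^2/2) * q := by
      intro t hle
      have h := hupper k hk (x k + t • w) hle
      have hs1 : ∑ i, gk k i * ((x k + t • w) i - x k i) = -(t * q) := by
        rw [hq, Finset.mul_sum, ← Finset.sum_neg_distrib]
        refine Finset.sum_congr rfl (fun i _ => ?_)
        rw [hcoord t i]
        ring
      have hs2 : ∑ i, d k i * ((x k + t • w) i - x k i)^2 = t^2 * q := by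
        rw [hq, Finset.mul_sum]
        refine Finset.sum_congr rfl (fun i _ => ?_)
        rw [hcoord t i]
        have : d k i ≠ 0 := (hdpos k i).ne'
        field_simp
      rw [hs1, hs2] at h
      have : Φ (x k) + -(t * q) + 1/2 * (t^2 * q) = Φ (x k) - (t - t^2/2) * q := by ring
      linarith [h, this.ge]
    rcases eq_or_lt_of_le hq0 with hq0' | hqpos
    · -- q = 0 : gradient is zero
      have hall : ∀ i, gk k i = 0 := by
        intro i
        by_contra hne
        have hipos : 0 < (gk k i)^2 / d k i :=
          div_pos (by positivity) (hdpos k i)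
        have : 0 < q := by
          rw [hq]
          exact Finset.sum_pos' (fun j _ => div_nonneg (sq_nonneg _) (le_of_lt (hdpos k j)))
            ⟨i, Finset.mem_univ i, hipos⟩
        linarith [hq0'.symm.le]
      have hxx : x (k+1) = x k := by
        ext i
        rw [hdyn k i, hall i]
        simp
      have hnz : ‖gk k‖^2 = 0 := by
        rw [hnormsq]
        refine Finset.sum_eq_zero (fun i _ => by rw [hall i]; ring)
      rw [hxx, hnz]
      simp
    · -- q > 0
      set ψ : ℝ → ℝ := fun t => Φ (x k + t • w) with hψdef
      have hψcont : Continuous ψ := by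
        apply hΦcont.comp
        exact continuous_const.add (continuous_id.smul continuous_const)
      have hψ0 : ψ 0 = Φ (x k) := by simp [hψdef]
      have hline : HasDerivAt (fun s : ℝ => x k + s • w) w 0 := by
        simpa using ((hasDerivAt_id (0:ℝ)).smul_const w).const_add (x k)
      have hL0 : HasFDerivAt Φ L (x k + (0:ℝ) • w) := by
        rw [show x k + (0:ℝ) • w = x k by simp]
        exact hL
      have hder : HasDerivAt ψ (L w) 0 := hL0.comp_hasDerivAt 0 hline
      have hLw : L w = -q := by
        rw [hLv w, hq, ← Finset.sum_neg_distrib]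
        refine Finset.sum_congr rfl (fun i _ => ?_)
        rw [hwapp]
        ring
      have hder' : HasDerivAt ψ (-q) 0 := by rw [← hLw]; exact hder
      set A : Set ℝ := {t | t ∈ Set.Icc (0:ℝ) 1 ∧ ψ t ≤ ψ 0} with hAdef
      have hA0 : (0:ℝ) ∈ A := ⟨⟨le_refl 0, by norm_num⟩, le_refl _⟩
      have hAbdd : BddAbove A := ⟨1, fun t ht => ht.1.2⟩
      have hAclosed : IsClosed A := by
        have : A = Set.Icc (0:ℝ) 1 ∩ {t | ψ t ≤ ψ 0} := rfl
        rw [this]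
        exact isClosed_Icc.inter (isClosed_le hψcont continuous_const)
      set τ : ℝ := sSup A with hτdef
      have hτA : τ ∈ A := hAclosed.csSup_mem ⟨0, hA0⟩ hAbdd
      have hτub : ∀ t ∈ A, t ≤ τ := fun t ht => le_csSup hAbdd ht
      have key : ∀ t ∈ A, ψ t ≤ ψ 0 - (t - t^2/2) * q := by
        intro t ht
        have := hup t (by rw [← hψ0]; exact ht.2)
        rw [← hψ0] at this
        exact this
      have hτ1 : τ = 1 := by
        by_contra hne
        have hτlt : τ < 1 := lt_of_le_of_ne hτA.1.2 hne
        rcases eq_or_lt_of_le hτA.1.1 with hτ0 | hτpos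
        · -- τ = 0
          have hev := eventually_lt_of_hasDerivAt_neg hder' (by linarith)
          have hmem : Set.Ioo (0:ℝ) 1 ∈ nhdsWithin (0:ℝ) (Set.Ioi 0) :=
            Ioo_mem_nhdsGT_of_mem ⟨le_refl 0, by norm_num⟩
          obtain ⟨t, htlt, ht01⟩ :=
            (hev.and (eventually_of_mem hmem (fun t ht => ht))).exists
          have htA : t ∈ A := ⟨⟨le_of_lt ht01.1, le_of_lt ht01.2⟩, le_of_lt htlt⟩
          have := hτub t htA
          rw [← hτ0] at this
          linarith [ht01.1]
        · -- 0 < τ < 1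
          have hψτ : ψ τ < ψ 0 := by
            have h1 := key τ hτA
            have h2 : 0 < (τ - τ^2/2) * q := by
              apply mul_pos _ hqpos
              nlinarith
            linarith
          have hevn : ∀ᶠ t in nhds τ, ψ t < ψ 0 :=
            (hψcont.tendsto τ).eventually_lt_const hψτ
          have hev : ∀ᶠ t in nhdsWithin τ (Set.Ioi τ), ψ t < ψ 0 :=
            eventually_nhdsWithin_of_eventually_nhds hevn
          have hmem : Set.Ioo τ 1 ∈ nhdsWithin τ (Set.Ioi τ) :=
            Ioo_mem_nhdsGT_of_mem ⟨le_refl τ, hτlt⟩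
          obtain ⟨t, htlt, ht01⟩ :=
            (hev.and (eventually_of_mem hmem (fun t ht => ht))).exists
          have htA : t ∈ A := ⟨⟨le_trans hτA.1.1 (le_of_lt ht01.1), le_of_lt ht01.2⟩,
            le_of_lt htlt⟩
          have := hτub t htA
          linarith [ht01.1]
      have h1A : (1:ℝ) ∈ A := by rw [← hτ1]; exact hτA
      have hfin := key 1 h1A
      have hψ1 : ψ 1 = Φ (x (k+1)) := by
        rw [hψdef]
        simp only [one_smul]
        rw [hx1]
      have hqge : ‖gk k‖^2 / m ≤ q := by
        rw [hnormsq, Finset.sum_div, hq]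
        refine Finset.sum_le_sum (fun i _ => ?_)
        exact div_le_div_of_nonneg_left (sq_nonneg _) (hdpos k i) (hdm k i)
      have heq : (1/(2*m)) * ‖gk k‖^2 = (‖gk k‖^2 / m) / 2 := by
        rw [div_div, one_div, inv_mul_eq_div, mul_comm m 2]
      rw [← hψ1, heq]
      rw [hψ0] at hfin
      norm_num at hfin
      linarith
  -- beyond the finitely many bad indices
  obtain ⟨N, hN⟩ := hfinD.bddAbove
  set K : ℕ := N + 1 with hK
  have hgoodK : ∀ k, K ≤ k → ¬(∃ i j, i ≠ j ∧ g i j (x k i) (x k j) = 0) := by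
    intro k hk hmem
    have : k ≤ N := hN hmem
    omega
  obtain ⟨B, hB⟩ := hfB
  have hΦlb : ∀ z, B ≤ Φ z := by
    intro z
    have h1 : B ≤ f z := hB ⟨z, rfl⟩
    have h2 : 0 ≤ (1/2 : ℝ) * ∑ i, ∑ j ∈ Finset.univ.filter (fun j => j ≠ i),
        max (g i j (z i) (z j)) 0 := by
      apply mul_nonneg (by norm_num)
      exact Finset.sum_nonneg (fun i _ =>
        Finset.sum_nonneg (fun j _ => le_max_right _ _))
    rw [hΦ z]
    linarith
  set c : ℝ := 1/(2*m) with hc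
  have hcpos : 0 < c := by rw [hc]; positivity
  have hstep : ∀ j : ℕ, Φ (x (K + j + 1)) ≤ Φ (x (K + j)) - c * ‖gk (K + j)‖^2 :=
    fun j => hdescent (K + j) (hgoodK _ (by omega))
  set Ψ : ℕ → ℝ := fun j => Φ (x (K + j)) with hΨdef
  have hΨsucc : ∀ j, Ψ (j+1) ≤ Ψ j := by
    intro j
    have h1 := hstep j
    have h2 : 0 ≤ c * ‖gk (K + j)‖^2 := by positivity
    have : K + (j + 1) = K + j + 1 := by omega
    rw [hΨdef]
    simp only [this]
    linarith
  have hΨanti : Antitone Ψ := antitone_nat_of_succ_le hΨsucc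
  have hΨbdd : BddBelow (Set.range Ψ) := ⟨B, by rintro _ ⟨j, rfl⟩; exact hΦlb _⟩
  have hΨlim : Tendsto Ψ atTop (nhds (⨅ j, Ψ j)) := tendsto_atTop_ciInf hΨanti hΨbdd
  have hΨlim' : Tendsto (fun j => Ψ (j+1)) atTop (nhds (⨅ j, Ψ j)) :=
    hΨlim.comp (tendsto_add_atTop_nat 1)
  have hdiff : Tendsto (fun j => Ψ j - Ψ (j+1)) atTop (nhds 0) := by
    have := hΨlim.sub hΨlim'
    simpa using this
  have hsq : Tendsto (fun j => ‖gk (K + j)‖^2) atTop (nhds 0) := by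
    refine squeeze_zero (g := fun j => (Ψ j - Ψ (j+1))/c) (fun j => sq_nonneg _) (fun j => ?_) ?_
    · -- ‖gk (K+j)‖² ≤ (Ψ j - Ψ (j+1)) / c
      have h1 := hstep j
      have h2 : K + (j + 1) = K + j + 1 := by omega
      have h3 : Ψ (j+1) ≤ Ψ j - c * ‖gk (K + j)‖^2 := by
        rw [hΨdef]; simp only [h2]; exact h1
      rw [le_div_iff₀ hcpos]
      linarith [mul_comm c (‖gk (K + j)‖^2)]
    · have := hdiff.div_const c
      simpa using this
  have hnormK : Tendsto (fun j => ‖gk (K + j)‖) atTop (nhds 0) := by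
    have h1 := hsq.sqrt
    simp only [Real.sqrt_zero] at h1
    have h2 : (fun j => Real.sqrt (‖gk (K + j)‖^2)) = fun j => ‖gk (K + j)‖ := by
      funext j
      exact Real.sqrt_sq (norm_nonneg _)
    rwa [h2] at h1
  have hnormfull : Tendsto (fun k => ‖gk k‖) atTop (nhds 0) := by
    rw [← tendsto_add_atTop_iff_nat K]
    have : (fun j => ‖gk (j + K)‖) = fun j => ‖gk (K + j)‖ := by
      funext j; rw [Nat.add_comm]
    rw [this]
    exact hnormK
  have hinner : ∀ u v : EuclideanSpace ℝ (Fin n), (inner ℝ u v : ℝ) = ∑ i, u i * v i := by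
    intro u v
    simp [PiLp.inner_apply, RCLike.inner_apply, mul_comm]
  have hcluster : ∀ z, MapClusterPt z atTop x → ∀ y, Φ z ≤ Φ y := by
    intro z hz y
    obtain ⟨φ, hφmono, hφtend⟩ := TopologicalSpace.FirstCountableTopology.tendsto_subseq hz
    have hle : ∀ᶠ j in atTop, Φ (x (φ j)) + (inner ℝ (gk (φ j)) (y - x (φ j)) : ℝ) ≤ Φ y := by
      filter_upwards [eventually_ge_atTop K] with j hj
      have hKφ : K ≤ φ j := le_trans hj hφmono.le_apply
      have hsb := hsub (φ j) (hgoodK _ hKφ) y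
      rw [hinner]
      have : ∑ i, gk (φ j) i * ((y - x (φ j)) i) = ∑ i, gk (φ j) i * (y i - x (φ j) i) :=
        Finset.sum_congr rfl (fun i _ => by rw [PiLp.sub_apply])
      rw [this]
      exact hsb
    have hgk0 : Tendsto (fun j => gk (φ j)) atTop (nhds 0) := by
      have h1 : Tendsto gk atTop (nhds 0) := tendsto_zero_iff_norm_tendsto_zero.2 hnormfull
      exact h1.comp hφmono.tendsto_atTop
    have h2 : Tendsto (fun j => y - x (φ j)) atTop (nhds (y - z)) :=
      tendsto_const_nhds.sub hφtend
    have h3 : Tendsto (fun j => (inner ℝ (gk (φ j)) (y - x (φ j)) : ℝ)) atTop (nhds 0) := by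
      have h := Filter.Tendsto.inner (𝕜 := ℝ) hgk0 h2
      simpa using h
    have h4 : Tendsto (fun j => Φ (x (φ j)) + (inner ℝ (gk (φ j)) (y - x (φ j)) : ℝ))
        atTop (nhds (Φ z + 0)) := ((hΦcont.tendsto z).comp hφtend).add h3
    rw [add_zero] at h4
    exact le_of_tendsto h4 hle
  exact ⟨hnormfull, hcluster, fun xs hxs y => hcluster xs hxs.mapClusterPt y⟩
end

section
/- Let n ≥ 1, let M = {(i,j) : i ≠ j, i,j ∈ [n]}, and let m = |M|. For each i let p_i: ℝ → ℝ and for each (i,j) ∈ M let q_ij: ℝ → ℝ be continuous nondecreasing functions with p_i(0) = q_ij(0) = 0. Let L: ℝⁿ × ℝ^m → ℝ be continuously differentiable, convex in its first argument and concave in its second argument, and let (x̄, λ̄) ∈ ℝⁿ × [0,1]^m be a saddle point: L(p(x̄), q(λ)) ≤ L(p(x̄), q(λ̄)) ≤ L(p(x), q(λ̄)) for all x ∈ ℝⁿ and all λ ∈ [0,1]^m, where p(x) = (p_1(x_1),…,p_n(x_n)) and q(λ) = (q_ij(λ_ij))_{(i,j)∈M}. Define P_i(s) = ∫_{x̄_i}^{s}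 p_i(u) du, Q_ij(s) = ∫_{λ̄_ij}^{s} q_ij(u) du, and V(x,λ) = ∑_i D_{P_i}(x_i, x̄_i) + ∑_{(i,j)∈M} D_{Q_ij}(λ_ij, λ̄_ij). Let x: [0,∞) → ℝⁿ and λ: [0,∞) → [0,1]^m be differentiable trajectories satisfying, for all t ≥ 0, ẋ_i(t) = −∂L/∂u_i (p(x(t)), q(λ(t))) for each i, and λ̇_ij(t) = [∂L/∂v_ij (p(x(t)), q(λ(t)))]^{[0,1]}_{λ_ij(t)} for each (i,j) ∈ M, where [a]^{[0,1]}_λ equals a if 0 < λ < 1, max{0,a} if λ = 0, and min{0,a} if λ = 1. Then d/dt V(x(t), λ(t)) ≤ 0 for all t ≥ 0; i.e., V is nonincreasing along the trajectories. -/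
open Filter

lemma convex_tangent_le {f : ℝ → ℝ} (hf : ConvexOn ℝ Set.univ f)
    {a d : ℝ} (hd : HasDerivAt f d a) (b : ℝ) : f a + d * (b - a) ≤ f b := by
  rcases lt_trichotomy a b with h | h | h
  · have h1 := hf.le_slope_of_hasDerivAt (Set.mem_univ a) (Set.mem_univ b) h hd
    rw [slope_def_field] at h1
    have hb : (0:ℝ) < b - a := by linarith
    rw [le_div_iff₀ hb] at h1
    linarith
  · simp [h]
  · have h1 := hf.slope_le_of_hasDerivAt (Set.mem_univ b) (Set.mem_univ a) h hd
    rw [slope_def_field] at h1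
    have hb : (0:ℝ) < a - b := by linarith
    rw [div_le_iff₀ hb] at h1
    linarith

/-- Gradient inequality for convex differentiable functions on a pi type. -/
lemma convex_grad_ineq {ι : Type*} [Fintype ι]
    {f : (ι → ℝ) → ℝ} (hf : ConvexOn ℝ Set.univ f)
    {x : ι → ℝ} {f' : (ι → ℝ) →L[ℝ] ℝ} (hd : HasFDerivAt f f' x) (y : ι → ℝ) :
    f x + f' (y - x) ≤ f y := by
  have hline : ∀ s : ℝ, HasDerivAt (fun s : ℝ => x + s • (y - x)) (y - x) s := by
    intro s
    simpa using ((hasDerivAt_id s).smul_const (y - x)).const_add x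
  have hφc : ConvexOn ℝ Set.univ (fun s : ℝ => f (x + s • (y - x))) := by
    have := hf.comp_affineMap (AffineMap.lineMap x y)
    simp only [Set.preimage_univ] at this
    convert this using 2 with s
    case e'_12 => simp [AffineMap.lineMap_apply, add_comm]
    all_goals rfl
  have hφd : HasDerivAt (fun s : ℝ => f (x + s • (y - x))) (f' (y - x)) 0 := by
    have hd0 : HasFDerivAt f f' ((fun s : ℝ => x + s • (y - x)) 0) := by simpa using hd
    exact hd0.comp_hasDerivAt 0 (hline 0)
  have := convex_tangent_le hφc hφd 1
  simpa using this

lemma concave_grad_ineq {ι : Type*} [Fintype ι]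
    {f : (ι → ℝ) → ℝ} (hf : ConcaveOn ℝ Set.univ f)
    {x : ι → ℝ} {f' : (ι → ℝ) →L[ℝ] ℝ} (hd : HasFDerivAt f f' x) (y : ι → ℝ) :
    f y ≤ f x + f' (y - x) := by
  have := convex_grad_ineq hf.neg hd.neg y
  simp only [Pi.neg_apply, ContinuousLinearMap.neg_apply] at this
  linarith

lemma hasDerivAt_update_pi {ι : Type*} [Fintype ι] [DecidableEq ι]
    {f : (ι → ℝ) → ℝ} {x : ι → ℝ} {f' : (ι → ℝ) →L[ℝ] ℝ} (hd : HasFDerivAt f f' x) (i : ι) :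
    HasDerivAt (fun z => f (Function.update x i z)) (f' (Pi.single i 1)) (x i) := by
  have key : ∀ z : ℝ, Function.update x i z = x + (z - x i) • (Pi.single i 1 : ι → ℝ) := by
    intro z; funext j
    rcases eq_or_ne j i with h | h
    · subst h; simp
    · simp [Function.update_of_ne h, Pi.single_apply, h]
  have hg : HasDerivAt (fun z : ℝ => x + (z - x i) • (Pi.single i 1 : ι → ℝ))
      ((Pi.single i 1 : ι → ℝ)) (x i) := by
    simpa using (((hasDerivAt_id (x i)).sub_const (x i)).smul_const
      (Pi.single i 1 : ι → ℝ)).const_add x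
  have hd0 : HasFDerivAt f f' ((fun z : ℝ => x + (z - x i) • (Pi.single i 1 : ι → ℝ)) (x i)) := by
    simpa using hd
  have := hd0.comp_hasDerivAt (x i) hg
  simpa only [Function.comp_def, ← key] using this

lemma fderiv_apply_sum {ι : Type*} [Fintype ι] [DecidableEq ι]
    (f' : (ι → ℝ) →L[ℝ] ℝ) (w : ι → ℝ) :
    f' w = ∑ i, w i * f' (Pi.single i 1) := by
  have hw : w = ∑ i, w i • (Pi.single i 1 : ι → ℝ) := by
    funext j
    rw [Finset.sum_apply]
    simp [Pi.single_apply]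
  conv_lhs => rw [hw]
  rw [map_sum]
  simp [smul_eq_mul]


/-- continuous-time constrained saddle-point dynamics: along the
projected gradient flow for the saddle-point problem
`min_x max_{λ ∈ [0,1]^M} L(p(x), q(λ))`, the sum of Bregman divergences
`V(x,λ) = ∑ᵢ D_{Pᵢ}(xᵢ, x̄ᵢ) + ∑ₑ D_{Qₑ}(λₑ, λ̄ₑ)` to a saddle point `(x̄, λ̄)` is
nonincreasing: its time derivative exists and is nonpositive at every `t ≥ 0`.
Here `Pᵢ(s) = ∫_{x̄ᵢ}^s pᵢ`, so `D_{Pᵢ}(xᵢ, x̄ᵢ) = ∫_{x̄ᵢ}^{xᵢ} pᵢ − pᵢ(x̄ᵢ)(xᵢ − x̄ᵢ)`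
(and analogously for `Qₑ`), and the dual flow is projected onto the unit box. -/
theorem continuous_time_saddle_point_flow_bregman_lyapunov
    (n : ℕ) (hn : 1 ≤ n)
    (p : Fin n → ℝ → ℝ) (q : {e : Fin n × Fin n // e.1 ≠ e.2} → ℝ → ℝ)
    (hpcont : ∀ i, Continuous (p i)) (hpmono : ∀ i, Monotone (p i))
    (hp0 : ∀ i, p i 0 = 0)
    (hqcont : ∀ e, Continuous (q e)) (hqmono : ∀ e, Monotone (q e))
    (hq0 : ∀ e, q e 0 = 0)
    (L : (Fin n → ℝ) → ({e : Fin n × Fin n // e.1 ≠ e.2} → ℝ) → ℝ)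
    (hL : ContDiff ℝ 1
      (fun uv : (Fin n → ℝ) × ({e : Fin n × Fin n // e.1 ≠ e.2} → ℝ) => L uv.1 uv.2))
    (hconv : ∀ v, ConvexOn ℝ Set.univ (fun u => L u v))
    (hconc : ∀ u, ConcaveOn ℝ Set.univ (fun v => L u v))
    (xbar : Fin n → ℝ) (lbar : {e : Fin n × Fin n // e.1 ≠ e.2} → ℝ)
    (hlbar : ∀ e, lbar e ∈ Set.Icc (0:ℝ) 1)
    (hsaddle : ∀ (xv : Fin n → ℝ) (lv : {e : Fin n × Fin n // e.1 ≠ e.2} → ℝ),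
      (∀ e, lv e ∈ Set.Icc (0:ℝ) 1) →
      L (fun i => p i (xbar i)) (fun e => q e (lv e))
          ≤ L (fun i => p i (xbar i)) (fun e => q e (lbar e)) ∧
      L (fun i => p i (xbar i)) (fun e => q e (lbar e))
          ≤ L (fun i => p i (xv i)) (fun e => q e (lbar e)))
    (x : ℝ → Fin n → ℝ) (lam : ℝ → {e : Fin n × Fin n // e.1 ≠ e.2} → ℝ)
    (hlam01 : ∀ t, 0 ≤ t → ∀ e, lam t e ∈ Set.Icc (0:ℝ) 1)
    (hxdyn : ∀ t, 0 ≤ t → ∀ i, HasDerivAt (fun s => x s i)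
      (-(deriv (fun z => L (Function.update (fun i' => p i' (x t i')) i z)
          (fun e => q e (lam t e))) (p i (x t i)))) t)
    (hldyn : ∀ t, 0 ≤ t → ∀ e, HasDerivAt (fun s => lam s e)
      (if lam t e = 0 then
        max 0 (deriv (fun z => L (fun i' => p i' (x t i'))
          (Function.update (fun e' => q e' (lam t e')) e z)) (q e (lam t e)))
      else if lam t e = 1 then
        min 0 (deriv (fun z => L (fun i' => p i' (x t i'))
          (Function.update (fun e' => q e' (lam t e')) e z)) (q e (lam t e)))
      else
        deriv (fun z => L (fun i' => p i' (x t i'))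
          (Function.update (fun e' => q e' (lam t e')) e z)) (q e (lam t e))) t) :
    ∀ t, 0 ≤ t → ∃ dV : ℝ,
      HasDerivAt (fun s =>
        (∑ i, ((∫ u in (xbar i)..(x s i), p i u) - p i (xbar i) * (x s i - xbar i))) +
        ∑ e, ((∫ u in (lbar e)..(lam s e), q e u) - q e (lbar e) * (lam s e - lbar e)))
        dV t ∧ dV ≤ 0 := by
  intro t ht
  classical
  have hLd : Differentiable ℝ
      (fun uv : (Fin n → ℝ) × ({e : Fin n × Fin n // e.1 ≠ e.2} → ℝ) => L uv.1 uv.2) :=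
    hL.differentiable one_ne_zero
  -- derivatives of the partial maps
  have hFd : DifferentiableAt ℝ (fun w => L w (fun e => q e (lam t e)))
      (fun i => p i (x t i)) := by
    have h1 : DifferentiableAt ℝ
        (fun uv : (Fin n → ℝ) × ({e : Fin n × Fin n // e.1 ≠ e.2} → ℝ) => L uv.1 uv.2)
        ((fun i => p i (x t i)), (fun e => q e (lam t e))) := hLd _
    have h2 : DifferentiableAt ℝ
        (fun w : Fin n → ℝ => (w, (fun e => q e (lam t e)))) (fun i => p i (x t i)) :=
      differentiableAt_fun_id.prodMk (differentiableAt_const _)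
    exact DifferentiableAt.comp
      (g := fun uv : (Fin n → ℝ) × ({e : Fin n × Fin n // e.1 ≠ e.2} → ℝ) => L uv.1 uv.2)
      (f := fun w : Fin n → ℝ => (w, (fun e => q e (lam t e)))) _ h1 h2
  have hGd : DifferentiableAt ℝ (fun w => L (fun i' => p i' (x t i')) w)
      (fun e => q e (lam t e)) := by
    have h1 : DifferentiableAt ℝ
        (fun uv : (Fin n → ℝ) × ({e : Fin n × Fin n // e.1 ≠ e.2} → ℝ) => L uv.1 uv.2)
        ((fun i' => p i' (x t i')), (fun e => q e (lam t e))) := hLd _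
    have h2 : DifferentiableAt ℝ
        (fun w : {e : Fin n × Fin n // e.1 ≠ e.2} → ℝ => ((fun i' => p i' (x t i')), w))
        (fun e => q e (lam t e)) :=
      (differentiableAt_const _).prodMk differentiableAt_fun_id
    exact DifferentiableAt.comp
      (g := fun uv : (Fin n → ℝ) × ({e : Fin n × Fin n // e.1 ≠ e.2} → ℝ) => L uv.1 uv.2)
      (f := fun w : {e : Fin n × Fin n // e.1 ≠ e.2} → ℝ => ((fun i' => p i' (x t i')), w))
      _ h1 h2
  set A := fderiv ℝ (fun w => L w (fun e => q e (lam t e))) (fun i => p i (x t i)) with hAdef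
  set B := fderiv ℝ (fun w => L (fun i' => p i' (x t i')) w) (fun e => q e (lam t e)) with hBdef
  have hA : HasFDerivAt (fun w => L w (fun e => q e (lam t e))) A (fun i => p i (x t i)) :=
    hFd.hasFDerivAt
  have hB : HasFDerivAt (fun w => L (fun i' => p i' (x t i')) w) B (fun e => q e (lam t e)) :=
    hGd.hasFDerivAt
  -- identify the partial derivatives in the dynamics
  have hDx : ∀ i, deriv (fun z => L (Function.update (fun i' => p i' (x t i')) i z)
      (fun e => q e (lam t e))) (p i (x t i)) = A (Pi.single i 1) :=
    fun i => (hasDerivAt_update_pi hA i).deriv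
  have hDl : ∀ e, deriv (fun z => L (fun i' => p i' (x t i'))
      (Function.update (fun e' => q e' (lam t e')) e z)) (q e (lam t e)) = B (Pi.single e 1) :=
    fun e => (hasDerivAt_update_pi hB e).deriv
  have hx : ∀ i, HasDerivAt (fun s => x s i) (-(A (Pi.single i 1))) t := by
    intro i
    have h := hxdyn t ht i
    rwa [hDx i] at h
  set D : {e : Fin n × Fin n // e.1 ≠ e.2} → ℝ := fun e =>
    if lam t e = 0 then max 0 (B (Pi.single e 1))
    else if lam t e = 1 then min 0 (B (Pi.single e 1))
    else B (Pi.single e 1) with hDdef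
  have hl : ∀ e, HasDerivAt (fun s => lam s e) (D e) t := by
    intro e
    have h := hldyn t ht e
    rw [hDl e] at h
    exact h
  -- derivative of each summand
  have hVx : ∀ i : Fin n, HasDerivAt
      (fun s => (∫ u in (xbar i)..(x s i), p i u) - p i (xbar i) * (x s i - xbar i))
      ((p i (x t i) - p i (xbar i)) * (-(A (Pi.single i 1)))) t := by
    intro i
    have h1 : HasDerivAt (fun y => ∫ u in (xbar i)..y, p i u) (p i (x t i)) (x t i) :=
      ((hpcont i).integral_hasStrictDerivAt (xbar i) (x t i)).hasDerivAt
    have h2 := h1.comp t (hx i)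
    have h3 : HasDerivAt (fun s => p i (xbar i) * (x s i - xbar i))
        (p i (xbar i) * (-(A (Pi.single i 1)))) t :=
      ((hx i).sub_const (xbar i)).const_mul (p i (xbar i))
    have h4 := h2.sub h3
    simp only [Function.comp_def] at h4
    convert h4 using 1
    case e'_9 => ring
    all_goals rfl
  have hVl : ∀ e, HasDerivAt
      (fun s => (∫ u in (lbar e)..(lam s e), q e u) - q e (lbar e) * (lam s e - lbar e))
      ((q e (lam t e) - q e (lbar e)) * D e) t := by
    intro e
    have h1 : HasDerivAt (fun y => ∫ u in (lbar e)..y, q e u) (q e (lam t e)) (lam t e) :=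
      ((hqcont e).integral_hasStrictDerivAt (lbar e) (lam t e)).hasDerivAt
    have h2 := h1.comp t (hl e)
    have h3 : HasDerivAt (fun s => q e (lbar e) * (lam s e - lbar e))
        (q e (lbar e) * D e) t :=
      ((hl e).sub_const (lbar e)).const_mul (q e (lbar e))
    have h4 := h2.sub h3
    simp only [Function.comp_def] at h4
    convert h4 using 1
    case e'_9 => ring
    all_goals rfl
  have hderiv := (HasDerivAt.fun_sum (fun i (_ : i ∈ Finset.univ) => hVx i)).add
    (HasDerivAt.fun_sum (fun e (_ : e ∈ Finset.univ) => hVl e))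
  refine ⟨_, hderiv, ?_⟩
  -- now the sign bound
  obtain ⟨hsa1, hsa2⟩ := hsaddle (x t) (lam t) (hlam01 t ht)
  -- convex part
  have hS1 : (∑ i, (p i (x t i) - p i (xbar i)) * (-(A (Pi.single i 1))))
      ≤ L (fun i => p i (xbar i)) (fun e => q e (lam t e))
        - L (fun i => p i (x t i)) (fun e => q e (lam t e)) := by
    have h := convex_grad_ineq (hconv (fun e => q e (lam t e))) hA (fun i => p i (xbar i))
    have heq : A ((fun i => p i (xbar i)) - (fun i => p i (x t i)))
        = ∑ i, (p i (xbar i) - p i (x t i)) * A (Pi.single i 1) := by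
      rw [fderiv_apply_sum]
      exact Finset.sum_congr rfl fun i _ => by simp [Pi.sub_apply]
    rw [heq] at h
    have : (∑ i, (p i (x t i) - p i (xbar i)) * (-(A (Pi.single i 1))))
        = ∑ i, (p i (xbar i) - p i (x t i)) * A (Pi.single i 1) := by
      exact Finset.sum_congr rfl fun i _ => by ring
    rw [this]
    linarith
  -- concave part
  have hstep : ∀ e, (q e (lam t e) - q e (lbar e)) * D e
      ≤ (q e (lam t e) - q e (lbar e)) * B (Pi.single e 1) := by
    intro e
    rcases eq_or_ne (lam t e) 0 with h0 | h0
    · have hfac : q e (lam t e) - q e (lbar e) ≤ 0 := by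
        have : q e (lam t e) ≤ q e (lbar e) := by
          rw [h0]; exact hqmono e (hlbar e).1
        linarith
      have hDe : D e = max 0 (B (Pi.single e 1)) := by simp [hDdef, h0]
      rw [hDe]
      exact mul_le_mul_of_nonpos_left (le_max_right _ _) hfac
    · rcases eq_or_ne (lam t e) 1 with h1 | h1
      · have hfac : 0 ≤ q e (lam t e) - q e (lbar e) := by
          have : q e (lbar e) ≤ q e (lam t e) := by
            rw [h1]; exact hqmono e (hlbar e).2
          linarith
        have hDe : D e = min 0 (B (Pi.single e 1)) := by simp [hDdef, h0, h1]
        rw [hDe]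
        exact mul_le_mul_of_nonneg_left (min_le_right _ _) hfac
      · have hDe : D e = B (Pi.single e 1) := by simp [hDdef, h0, h1]
        rw [hDe]
  have hS2 : (∑ e, (q e (lam t e) - q e (lbar e)) * D e)
      ≤ L (fun i' => p i' (x t i')) (fun e => q e (lam t e))
        - L (fun i' => p i' (x t i')) (fun e => q e (lbar e)) := by
    have h := concave_grad_ineq (hconc (fun i' => p i' (x t i'))) hB (fun e => q e (lbar e))
    have heq : B ((fun e => q e (lbar e)) - (fun e => q e (lam t e)))
        = ∑ e, (q e (lbar e) - q e (lam t e)) * B (Pi.single e 1) := by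
      rw [fderiv_apply_sum]
      exact Finset.sum_congr rfl fun e _ => by simp [Pi.sub_apply]
    rw [heq] at h
    have h2 : (∑ e, (q e (lam t e) - q e (lbar e)) * B (Pi.single e 1))
        = -∑ e, (q e (lbar e) - q e (lam t e)) * B (Pi.single e 1) := by
      rw [← Finset.sum_neg_distrib]
      exact Finset.sum_congr rfl fun e _ => by ring
    calc (∑ e, (q e (lam t e) - q e (lbar e)) * D e)
        ≤ ∑ e, (q e (lam t e) - q e (lbar e)) * B (Pi.single e 1) :=
          Finset.sum_le_sum fun e _ => hstep e
      _ ≤ _ := by rw [h2]; linarith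
  linarith
end
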